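/- arXiv:2001.00181 — 4 statements merged into one kernel-verified Lean document; each statement's English description precedes it below -/
import Mathlib

section
/- For any finite simple graph G, the chromatic symmetric function satisfies X_G = Σ_π μ(π)^! · m_{μ(π)}, where the sum is over all stable partitions π of G, μ(π) is the type of π, μ^! = Π_i m_i! with m_i the multiplicity of the part i in μ, and m_μ is the monomial symmetric function indexed by μ. -/
open Finset MvPolynomial

/-- The chromatic symmetric function of `G`, realized in `N` variables. -/
noncomputable def csf {V : Type} [Fintype V] (G : SimpleGraph V) (N : ℕ) :
    MvPolynomial (Fin N) ℤ := by
  classical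
  exact ∑ κ ∈ Finset.univ.filter
      (fun κ : V → Fin N => ∀ u v : V, G.Adj u v → κ u ≠ κ v),
    ∏ v : V, X (κ v)

/-- A semistandard filling of the Young diagram `D` with entries in `Fin N`:
rows weakly increase (left to right) and columns strictly increase (top to bottom). -/
def IsSSYTof (D : YoungDiagram) (N : ℕ) (T : D.cells → Fin N) : Prop :=
  (∀ c d : D.cells, (c : ℕ × ℕ).1 = (d : ℕ × ℕ).1 → (c : ℕ × ℕ).2 ≤ (d : ℕ × ℕ).2 →
      T c ≤ T d) ∧
  (∀ c d : D.cells, (c : ℕ × ℕ).2 = (d : ℕ × ℕ).2 → (c : ℕ × ℕ).1 < (d : ℕ × ℕ).1 →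
      T c < T d)

/-- The Schur polynomial of shape `D` in `N` variables, as the sum of content
monomials over all semistandard Young tableaux of shape `D` with entries in `Fin N`. -/
noncomputable def schurShape (N : ℕ) (D : YoungDiagram) : MvPolynomial (Fin N) ℤ := by
  classical
  exact ∑ T ∈ Finset.univ.filter (fun T : D.cells → Fin N => IsSSYTof D N T),
    ∏ c : D.cells, X (T c)

/-- The Young diagram of a partition. -/
def diagramOf {n : ℕ} (μ : n.Partition) : YoungDiagram :=
  YoungDiagram.ofRowLens (μ.parts.sort (· ≥ ·)) (μ.parts.pairwise_sort (· ≥ ·)).sortedGE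

/-- The Schur polynomial `s_μ` in `N` variables. -/
noncomputable def schur (N : ℕ) {n : ℕ} (μ : n.Partition) : MvPolynomial (Fin N) ℤ :=
  schurShape N (diagramOf μ)

/-- A graph is Schur positive if its chromatic symmetric function, realized in any
number `N ≥ |V(G)|` of variables, is a nonnegative linear combination of the Schur
polynomials `s_λ`, `λ ⊢ |V(G)|`. -/
def SchurPositive {V : Type} [Fintype V] (G : SimpleGraph V) : Prop :=
  ∀ N : ℕ, Fintype.card V ≤ N →
    ∃ c : (Fintype.card V).Partition → ℤ,
      (∀ μ, 0 ≤ c μ) ∧ csf G N = ∑ μ, c μ • schur N μ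

/-- A graph is e-positive if its chromatic symmetric function, realized in any
number `N ≥ |V(G)|` of variables, is a nonnegative linear combination of the
polynomials `e_λ`, `λ ⊢ |V(G)|`. -/
def EPositive {V : Type} [Fintype V] (G : SimpleGraph V) : Prop :=
  ∀ N : ℕ, Fintype.card V ≤ N →
    ∃ c : (Fintype.card V).Partition → ℤ,
      (∀ μ, 0 ≤ c μ) ∧ csf G N = ∑ μ, c μ • esymmPart (Fin N) ℤ μ

/-- A stable (independent) set of vertices. -/
def IsStableSet {V : Type} (G : SimpleGraph V) (b : Finset V) : Prop :=
  ∀ u ∈ b, ∀ v ∈ b, ¬ G.Adj u v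

/-- A stable partition of `G`: a set partition of the vertex set all of whose
blocks are stable. -/
def IsStablePartition {V : Type} [Fintype V] [DecidableEq V] (G : SimpleGraph V)
    (P : Finpartition (Finset.univ : Finset V)) : Prop :=
  ∀ b ∈ P.parts, IsStableSet G b

/-- The type of a set partition: the multiset of its block sizes. -/
def typeOf {V : Type} [Fintype V] [DecidableEq V]
    (P : Finpartition (Finset.univ : Finset V)) : Multiset ℕ :=
  P.parts.val.map Finset.card
/-- `μ^!`: the product of the factorials of the multiplicities of the parts of `μ`. -/
def multFact (m : Multiset ℕ) : ℕ :=
  m.toFinset.prod fun i => Nat.factorial (m.count i)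

/-- The monomial symmetric polynomial `m_μ` in `N` variables: the sum of all
distinct monomials whose multiset of (nonzero) exponents equals `μ`. -/
noncomputable def mSym (N : ℕ) (μ : Multiset ℕ) : MvPolynomial (Fin N) ℤ := by
  classical
  exact ∑ f ∈ Finset.univ.filter
      (fun f : Fin N → Fin (μ.sum + 1) =>
        ((Finset.univ.val.map fun i : Fin N => (f i : ℕ)).filter fun k => k ≠ 0) = μ),
    ∏ i : Fin N, X i ^ (f i : ℕ)

section StanleyAux

section Aux

variable {V : Type} [Fintype V] [DecidableEq V] {N : ℕ}

/-- The partition of `V` into the fibers of `κ`. -/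
noncomputable def fiberPart (κ : V → Fin N) : Finpartition (Finset.univ : Finset V) :=
  letI : DecidableRel ⇑(Setoid.ker κ) := fun a b => inferInstanceAs (Decidable (κ a = κ b))
  Finpartition.ofSetoid (Setoid.ker κ)

/-- The number of vertices with color `i`. -/
def contf (κ : V → Fin N) (i : Fin N) : ℕ := (Finset.univ.filter fun v => κ v = i).card

lemma part_fiberPart (κ : V → Fin N) (a : V) :
    (fiberPart κ).part a = Finset.univ.filter (fun v => κ v = κ a) := by
  letI : DecidableRel ⇑(Setoid.ker κ) := fun a b => inferInstanceAs (Decidable (κ a = κ b))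
  ext b
  rw [fiberPart, Finpartition.mem_part_ofSetoid_iff_rel]
  simp only [Finset.mem_filter, Finset.mem_univ, true_and]
  exact ⟨fun h => h.symm, fun h => h.symm⟩

lemma parts_eq_image {α : Type} [DecidableEq α] {s : Finset α} (P : Finpartition s) :
    P.parts = s.image P.part := by
  ext t
  simp only [Finset.mem_image]
  constructor
  · intro ht
    obtain ⟨x, hx⟩ := P.nonempty_of_mem_parts ht
    have hxs : x ∈ s := Finset.mem_of_subset (P.le ht) hx
    exact ⟨x, hxs, P.part_eq_of_mem ht hx⟩
  · rintro ⟨a, ha, rfl⟩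
    exact P.part_mem.2 ha

lemma typeOf_fiberPart (κ : V → Fin N) :
    typeOf (fiberPart κ)
      = (Finset.univ.val.map (contf κ)).filter (fun k => k ≠ 0) := by
  have hparts : (fiberPart κ).parts
      = (Finset.univ.filter fun i : Fin N => contf κ i ≠ 0).image
          (fun i => Finset.univ.filter fun v => κ v = i) := by
    rw [parts_eq_image]
    ext t
    simp only [Finset.mem_image, Finset.mem_filter, Finset.mem_univ, true_and]
    constructor
    · rintro ⟨a, -, rfl⟩
      refine ⟨κ a, ?_, (part_fiberPart κ a).symm⟩
      rw [contf]
      exact Finset.card_ne_zero.2 ⟨a, Finset.mem_filter.2 ⟨Finset.mem_univ _, rfl⟩⟩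
    · rintro ⟨i, hi, rfl⟩
      rw [contf, Ne, Finset.card_eq_zero, ← Ne, ← Finset.nonempty_iff_ne_empty] at hi
      obtain ⟨a, ha⟩ := hi
      have hai : κ a = i := (Finset.mem_filter.1 ha).2
      exact ⟨a, by rw [part_fiberPart, hai]⟩
  have hinj : Set.InjOn (fun i => Finset.univ.filter fun v => κ v = i)
      (Finset.univ.filter fun i : Fin N => contf κ i ≠ 0) := by
    intro i hi j hj hij
    have hi' : contf κ i ≠ 0 := by
      have h := hi; rw [Finset.mem_coe, Finset.mem_filter] at h; exact h.2
    rw [contf, Ne, Finset.card_eq_zero, ← Ne, ← Finset.nonempty_iff_ne_empty] at hi'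
    obtain ⟨a, ha⟩ := hi'
    have h1 : κ a = i := (Finset.mem_filter.1 ha).2
    have h2 : a ∈ Finset.univ.filter fun v => κ v = j := by
      have hij' : (Finset.univ.filter fun v => κ v = i)
          = (Finset.univ.filter fun v => κ v = j) := hij
      rw [← hij']; exact ha
    have h3 : κ a = j := (Finset.mem_filter.1 h2).2
    rw [← h1, h3]
  rw [typeOf, hparts, Finset.image_val_of_injOn hinj, Multiset.map_map,
    Multiset.filter_map, ← Finset.filter_val]
  rfl

lemma prod_X_eq (κ : V → Fin N) :
    (∏ v : V, (X (κ v) : MvPolynomial (Fin N) ℤ)) = ∏ i : Fin N, X i ^ contf κ i := by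
  rw [← Finset.prod_fiberwise_of_maps_to (g := κ) (t := Finset.univ)
    (fun v _ => Finset.mem_univ _)]
  refine Finset.prod_congr rfl fun i _ => ?_
  calc ∏ v ∈ Finset.univ.filter fun v => κ v = i, (X (κ v) : MvPolynomial (Fin N) ℤ)
      = ∏ _v ∈ Finset.univ.filter fun v => κ v = i, (X i : MvPolynomial (Fin N) ℤ) :=
        Finset.prod_congr rfl fun v hv => by rw [(Finset.mem_filter.1 hv).2]
    _ = X i ^ contf κ i := by rw [Finset.prod_const, contf]

end Aux

open Classical in
lemma card_weight_equiv {α β : Type} [Fintype α] [Fintype β] [DecidableEq α] [DecidableEq β]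
    (w₁ : α → ℕ) (w₂ : β → ℕ)
    (h : Finset.univ.val.map w₁ = Finset.univ.val.map w₂) :
    Nat.card {e : α ≃ β // ∀ a, w₂ (e a) = w₁ a}
      = multFact (Finset.univ.val.map w₁) := by
  classical
  rw [Nat.card_eq_fintype_card]
  set m := Finset.univ.val.map w₁ with hm
  have hmem₁ : ∀ a : α, w₁ a ∈ m.toFinset := by
    intro a
    simp [hm, Multiset.mem_toFinset]
  have hcount₁ : ∀ s : ℕ, m.count s = Fintype.card {a : α // w₁ a = s} := by
    intro s
    rw [hm, Multiset.count_map, Fintype.card_subtype]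
    congr 1
    · ext a; simp [eq_comm]
  have hcount₂ : ∀ s : ℕ, m.count s = Fintype.card {b : β // w₂ b = s} := by
    intro s
    rw [hm]
    rw [show Multiset.map w₁ Finset.univ.val = Multiset.map w₂ Finset.univ.val from h]
    rw [Multiset.count_map, Fintype.card_subtype]
    congr 1
    · ext a; simp [eq_comm]
  have hmem₂ : ∀ b : β, w₂ b ∈ m.toFinset := by
    intro b
    rw [Multiset.mem_toFinset, hm,
      show Multiset.map w₁ Finset.univ.val = Multiset.map w₂ Finset.univ.val from h]
    simp
  have keyF : ∀ (F : ∀ s : m.toFinset, ({a : α // w₁ a = (s : ℕ)} ≃ {b : β // w₂ b = (s : ℕ)}))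
      (s t : m.toFinset) (_ : s = t) (a : α) (ha : w₁ a = (s : ℕ)) (ha' : w₁ a = (t : ℕ)),
      (F s ⟨a, ha⟩).1 = (F t ⟨a, ha'⟩).1 := by
    rintro F s t rfl a ha ha'; rfl
  have keyB : ∀ (F : ∀ s : m.toFinset, ({a : α // w₁ a = (s : ℕ)} ≃ {b : β // w₂ b = (s : ℕ)}))
      (s t : m.toFinset) (_ : s = t) (b : β) (hb : w₂ b = (s : ℕ)) (hb' : w₂ b = (t : ℕ)),
      ((F s).symm ⟨b, hb⟩).1 = ((F t).symm ⟨b, hb'⟩).1 := by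
    rintro F s t rfl b hb hb'; rfl
  -- the big equivalence
  have E : {e : α ≃ β // ∀ a, w₂ (e a) = w₁ a}
      ≃ ∀ s : m.toFinset, ({a : α // w₁ a = (s : ℕ)} ≃ {b : β // w₂ b = (s : ℕ)}) := by
    refine
      { toFun := fun e s => Equiv.subtypeEquiv e.1 (fun a => by
          constructor
          · intro ha; rw [e.2 a]; exact ha
          · intro hb; rw [← e.2 a]; exact hb)
        invFun := fun F =>
          ⟨{ toFun := fun a => (F ⟨w₁ a, hmem₁ a⟩ ⟨a, rfl⟩).1
             invFun := fun b => ((F ⟨w₂ b, hmem₂ b⟩).symm ⟨b, rfl⟩).1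
             left_inv := ?_
             right_inv := ?_ }, ?_⟩
        left_inv := ?_
        right_inv := ?_ }
    · intro a
      set s₀ : m.toFinset := ⟨w₁ a, hmem₁ a⟩ with hs₀
      set b := (F s₀ ⟨a, rfl⟩).1 with hb
      have hwb : w₂ b = (s₀ : ℕ) := (F s₀ ⟨a, rfl⟩).2
      have hst : (⟨w₂ b, hmem₂ b⟩ : m.toFinset) = s₀ := Subtype.ext hwb
      show (((F ⟨w₂ b, hmem₂ b⟩).symm ⟨b, rfl⟩ : {a' : α // w₁ a' = w₂ b})).1 = a
      rw [keyB F _ s₀ hst b rfl hwb]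
      have : (⟨b, hwb⟩ : {b' : β // w₂ b' = (s₀ : ℕ)}) = F s₀ ⟨a, rfl⟩ := Subtype.ext rfl
      rw [this, Equiv.symm_apply_apply]
    · intro b
      set s₀ : m.toFinset := ⟨w₂ b, hmem₂ b⟩ with hs₀
      set a := ((F s₀).symm ⟨b, rfl⟩).1 with ha
      have hwa : w₁ a = (s₀ : ℕ) := ((F s₀).symm ⟨b, rfl⟩).2
      have hst : (⟨w₁ a, hmem₁ a⟩ : m.toFinset) = s₀ := Subtype.ext hwa
      show ((F ⟨w₁ a, hmem₁ a⟩ ⟨a, rfl⟩ : {b' : β // w₂ b' = w₁ a})).1 = b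
      rw [keyF F _ s₀ hst a rfl hwa]
      have : (⟨a, hwa⟩ : {a' : α // w₁ a' = (s₀ : ℕ)}) = (F s₀).symm ⟨b, rfl⟩ :=
        Subtype.ext rfl
      rw [this, Equiv.apply_symm_apply]
    · intro a
      exact (F ⟨w₁ a, hmem₁ a⟩ ⟨a, rfl⟩).2
    · intro e
      apply Subtype.ext
      apply Equiv.ext
      intro a
      rfl
    · intro F
      funext s
      apply Equiv.ext
      intro x
      apply Subtype.ext
      have hst : (⟨w₁ x.1, hmem₁ x.1⟩ : m.toFinset) = s := Subtype.ext x.2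
      show (F ⟨w₁ x.1, hmem₁ x.1⟩ ⟨x.1, rfl⟩).1 = (F s x).1
      rw [keyF F _ s hst x.1 rfl x.2]
  rw [Fintype.card_congr E, Fintype.card_pi, multFact, ← Finset.prod_coe_sort m.toFinset]
  refine Finset.prod_congr rfl fun s _ => ?_
  rw [Fintype.card_equiv (Fintype.equivOfCardEq (by rw [← hcount₁, hcount₂])), ← hcount₁]

section Transfer

variable {V : Type} [Fintype V] [DecidableEq V] {N : ℕ}

open Classical in
/-- Colorings with fiber partition `P` and content `f` are equivalent to
weight-preserving bijections from parts of `P` to colors used by `f`. -/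
noncomputable def colorEquiv (P : Finpartition (Finset.univ : Finset V)) (f : Fin N → ℕ) :
    {κ : V → Fin N // fiberPart κ = P ∧ ∀ i, contf κ i = f i}
      ≃ {e : {b : Finset V // b ∈ P.parts} ≃ {i : Fin N // i ∈ Finset.univ.filter fun i => f i ≠ 0} //
          ∀ b, f (e b).1 = b.1.card} := by
  classical
  -- choice of a point in each part
  let pt : {b : Finset V // b ∈ P.parts} → V := fun b => (P.nonempty_of_mem_parts b.2).choose
  have hpt : ∀ b, pt b ∈ b.1 := fun b => (P.nonempty_of_mem_parts b.2).choose_spec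
  refine
    { toFun := fun x => ⟨⟨fun b => ⟨x.1 (pt b), ?_⟩,
        fun i => ⟨Finset.univ.filter fun v => x.1 v = i.1, ?_⟩,
        ?_, ?_⟩, ?_⟩
      invFun := fun y => ⟨fun v => (y.1 ⟨P.part v, P.part_mem.2 (Finset.mem_univ v)⟩).1, ?_, ?_⟩
      left_inv := ?_
      right_inv := ?_ }
  · -- used color
    rw [Finset.mem_filter]
    refine ⟨Finset.mem_univ _, ?_⟩
    rw [← x.2.2]
    exact Finset.card_ne_zero.2 ⟨pt b, Finset.mem_filter.2 ⟨Finset.mem_univ _, rfl⟩⟩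
  · -- fiber of used color is a part
    have hne : (Finset.univ.filter fun v => x.1 v = i.1).Nonempty := by
      rw [← Finset.card_ne_zero]
      show contf x.1 i.1 ≠ 0
      rw [x.2.2]
      exact (Finset.mem_filter.1 i.2).2
    obtain ⟨a, ha⟩ := hne
    have hai : x.1 a = i.1 := (Finset.mem_filter.1 ha).2
    have h : (Finset.univ.filter fun v => x.1 v = i.1) = (fiberPart x.1).part a := by
      rw [part_fiberPart, hai]
    rw [h, x.2.1]
    exact P.part_mem.2 (Finset.mem_univ a)
  · -- left inverse (inner)
    intro b
    apply Subtype.ext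
    show (Finset.univ.filter fun v => x.1 v = x.1 (pt b)) = b.1
    rw [← part_fiberPart, x.2.1]
    exact P.part_eq_of_mem b.2 (hpt b)
  · -- right inverse (inner)
    intro i
    apply Subtype.ext
    have key : ∀ b : {b : Finset V // b ∈ P.parts},
        b.1 = (Finset.univ.filter fun v => x.1 v = i.1) → x.1 (pt b) = i.1 := by
      intro b hc
      have h := hpt b
      rw [hc] at h
      exact (Finset.mem_filter.1 h).2
    exact key _ rfl
  · -- weights
    intro b
    show f (x.1 (pt b)) = b.1.card
    rw [← x.2.2]
    show (Finset.univ.filter fun v => x.1 v = x.1 (pt b)).card = b.1.card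
    congr 1
    rw [← part_fiberPart, x.2.1]
    exact P.part_eq_of_mem b.2 (hpt b)
  · -- fiberPart of the induced coloring
    have hfib : ∀ v : V, (Finset.univ.filter fun w =>
        (y.1 ⟨P.part w, P.part_mem.2 (Finset.mem_univ w)⟩).1
          = (y.1 ⟨P.part v, P.part_mem.2 (Finset.mem_univ v)⟩).1) = P.part v := by
      intro v
      ext w
      simp only [Finset.mem_filter, Finset.mem_univ, true_and]
      constructor
      · intro hw
        have h1 : (⟨P.part w, P.part_mem.2 (Finset.mem_univ w)⟩ : {b : Finset V // b ∈ P.parts})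
            = ⟨P.part v, P.part_mem.2 (Finset.mem_univ v)⟩ := y.1.injective (Subtype.ext hw)
        have h2 : P.part w = P.part v := congrArg Subtype.val h1
        rw [← h2]
        exact P.mem_part (Finset.mem_univ w)
      · intro hw
        have h2 : P.part w = P.part v :=
          (P.mem_part_iff_part_eq_part (Finset.mem_univ w) (Finset.mem_univ v)).1 hw
        exact congrArg (fun b => (y.1 b).1) (Subtype.ext h2)
    refine Finpartition.ext ?_
    rw [parts_eq_image (fiberPart _)]
    have himg : Finset.image (fiberPart fun v =>
          (y.1 ⟨P.part v, P.part_mem.2 (Finset.mem_univ v)⟩).1).part Finset.univ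
        = Finset.image P.part Finset.univ := by
      refine Finset.image_congr ?_
      intro v _
      rw [part_fiberPart]
      exact hfib v
    rw [himg]
    exact (parts_eq_image P).symm
  · -- content of the induced coloring
    intro i
    by_cases hi : f i = 0
    · rw [hi, contf, Finset.card_eq_zero, Finset.filter_eq_empty_iff]
      intro v _
      intro hv
      have h := (Finset.mem_filter.1 (y.1 ⟨P.part v, P.part_mem.2 (Finset.mem_univ v)⟩).2).2
      rw [hv] at h
      exact h hi
    · have hi' : i ∈ Finset.univ.filter fun j => f j ≠ 0 :=
        Finset.mem_filter.2 ⟨Finset.mem_univ _, hi⟩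
      set b := y.1.symm ⟨i, hi'⟩ with hb
      have heb : y.1 b = ⟨i, hi'⟩ := y.1.apply_symm_apply _
      have hfiber : (Finset.univ.filter fun w =>
          (y.1 ⟨P.part w, P.part_mem.2 (Finset.mem_univ w)⟩).1 = i) = b.1 := by
        ext w
        simp only [Finset.mem_filter, Finset.mem_univ, true_and]
        constructor
        · intro hw
          have h1 : (⟨P.part w, P.part_mem.2 (Finset.mem_univ w)⟩ : {b : Finset V // b ∈ P.parts})
              = b := y.1.injective (Subtype.ext (by rw [hw, heb]))
          have h2 : P.part w = b.1 := congrArg Subtype.val h1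
          rw [← h2]
          exact P.mem_part (Finset.mem_univ w)
        · intro hw
          have h2 : P.part w = b.1 := P.part_eq_of_mem b.2 hw
          have h3 : (⟨P.part w, P.part_mem.2 (Finset.mem_univ w)⟩ : {b : Finset V // b ∈ P.parts})
              = b := Subtype.ext h2
          calc (y.1 ⟨P.part w, P.part_mem.2 (Finset.mem_univ w)⟩).1
              = (y.1 b).1 := congrArg (fun c => (y.1 c).1) h3
            _ = i := by rw [heb]
      have hcard : f i = b.1.card := by
        have h := y.2 b
        rw [heb] at h
        exact h
      rw [hcard]
      exact congrArg Finset.card hfiber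
  · -- outer left inverse
    intro x
    apply Subtype.ext
    funext v
    show x.1 (pt ⟨P.part v, P.part_mem.2 (Finset.mem_univ v)⟩) = x.1 v
    set u := pt ⟨P.part v, P.part_mem.2 (Finset.mem_univ v)⟩ with hu
    have h : u ∈ P.part v := hpt ⟨P.part v, P.part_mem.2 (Finset.mem_univ v)⟩
    have h2 : P.part v = Finset.univ.filter fun w => x.1 w = x.1 v := by
      rw [← part_fiberPart, x.2.1]
    rw [h2] at h
    exact (Finset.mem_filter.1 h).2
  · -- outer right inverse
    intro y
    apply Subtype.ext
    apply Equiv.ext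
    intro b
    apply Subtype.ext
    show (y.1 ⟨P.part (pt b), P.part_mem.2 (Finset.mem_univ (pt b))⟩).1 = (y.1 b).1
    have h2 : P.part (pt b) = b.1 := P.part_eq_of_mem b.2 (hpt b)
    exact congrArg (fun c => (y.1 c).1) (Subtype.ext h2)

end Transfer

section Count
variable {V : Type} [Fintype V] [DecidableEq V] {N : ℕ}

lemma univ_val_map_subtype {α γ : Type} [DecidableEq α] (s : Finset α)
    [Fintype {x // x ∈ s}] (g : α → γ) :
    (Finset.univ.val.map fun x : {x // x ∈ s} => g x.1) = s.val.map g := by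
  have h : (Finset.univ.val.map fun x : {x // x ∈ s} => x.1) = s.val := by
    refine Multiset.Nodup.ext ?_ ?_ |>.2 ?_
    · exact Multiset.Nodup.map Subtype.val_injective Finset.univ.nodup
    · exact s.nodup
    · intro a
      simp only [Multiset.mem_map]
      constructor
      · rintro ⟨x, -, rfl⟩
        exact x.2
      · intro ha
        exact ⟨⟨a, ha⟩, by simp, rfl⟩
  calc (Finset.univ.val.map fun x : {x // x ∈ s} => g x.1)
      = ((Finset.univ.val.map fun x : {x // x ∈ s} => x.1).map g) := by
        rw [Multiset.map_map]; rfl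
    _ = s.val.map g := by rw [h]

set_option maxHeartbeats 1000000 in
open Classical in
lemma card_fiber_content (P : Finpartition (Finset.univ : Finset V)) (f : Fin N → ℕ)
    (hf : (Finset.univ.val.map f).filter (fun k => k ≠ 0) = typeOf P) :
    (Finset.univ.filter fun κ : V → Fin N => fiberPart κ = P ∧ ∀ i, contf κ i = f i).card
      = multFact (typeOf P) := by
  classical
  have h1 : (Finset.univ.val.map fun b : {b : Finset V // b ∈ P.parts} => b.1.card)
      = typeOf P := by
    rw [univ_val_map_subtype P.parts Finset.card]
    rfl
  have h2 : (Finset.univ.val.map fun i : {i : Fin N // i ∈ Finset.univ.filter fun j : Fin N => f j ≠ 0} => f i.1)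
      = typeOf P := by
    refine (@univ_val_map_subtype (Fin N) ℕ _
      (Finset.univ.filter fun j : Fin N => f j ≠ 0)
      (Subtype.fintype fun i => i ∈ Finset.univ.filter fun j : Fin N => f j ≠ 0) f).trans ?_
    rw [Finset.filter_val]
    have hcomp : Multiset.filter ((fun k => k ≠ 0) ∘ f) (Finset.univ.val : Multiset (Fin N))
        = Multiset.filter (fun j => f j ≠ 0) (Finset.univ.val : Multiset (Fin N)) :=
      Multiset.filter_congr (fun x _ => Iff.rfl)
    calc Multiset.map f (Multiset.filter (fun j => f j ≠ 0) (Finset.univ.val : Multiset (Fin N)))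
        = Multiset.map f (Multiset.filter ((fun k => k ≠ 0) ∘ f) Finset.univ.val) := by
          rw [hcomp]
      _ = Multiset.filter (fun k => k ≠ 0) (Multiset.map f Finset.univ.val) :=
          (Multiset.filter_map (fun k : ℕ => k ≠ 0) f Finset.univ.val).symm
      _ = typeOf P := hf
  have hcard := card_weight_equiv (fun b : {b : Finset V // b ∈ P.parts} => b.1.card)
      (fun i : {i : Fin N // i ∈ Finset.univ.filter fun j : Fin N => f j ≠ 0} => f i.1)
      (by rw [h1, h2])
  rw [h1] at hcard
  have step1 : (Finset.univ.filter fun κ : V → Fin N =>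
        fiberPart κ = P ∧ ∀ i, contf κ i = f i).card
      = Nat.card {κ : V → Fin N // fiberPart κ = P ∧ ∀ i, contf κ i = f i} := by
    rw [Nat.card_eq_fintype_card]
    exact (Fintype.card_subtype _).symm
  rw [step1]
  rw [Nat.card_congr (colorEquiv P f)]
  exact hcard

end Count

section Main

variable {V : Type} [Fintype V] [DecidableEq V] {N : ℕ}

open Classical in
lemma inner_sum_eq (P : Finpartition (Finset.univ : Finset V)) :
    ∑ κ ∈ Finset.univ.filter (fun κ : V → Fin N => fiberPart κ = P),
        ∏ v : V, (X (κ v) : MvPolynomial (Fin N) ℤ)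
      = (multFact (typeOf P) : ℤ) • mSym N (typeOf P) := by
  classical
  have hsum : (typeOf P).sum = Fintype.card V := by
    have h := P.sum_card_parts
    rw [Finset.card_univ] at h
    exact h
  have hbound : ∀ (κ : V → Fin N) (i : Fin N), contf κ i < (typeOf P).sum + 1 := by
    intro κ i
    refine Nat.lt_succ_of_le ?_
    rw [hsum]
    calc contf κ i ≤ Finset.univ.card := Finset.card_filter_le _ _
      _ = Fintype.card V := Finset.card_univ
  set fc : (V → Fin N) → Fin N → Fin ((typeOf P).sum + 1) :=
    fun κ i => ⟨contf κ i, hbound κ i⟩ with hfc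
  have hmap : ∀ κ ∈ Finset.univ.filter (fun κ : V → Fin N => fiberPart κ = P),
      fc κ ∈ Finset.univ.filter
        (fun f : Fin N → Fin ((typeOf P).sum + 1) =>
          ((Finset.univ.val.map fun i : Fin N => (f i : ℕ)).filter fun k => k ≠ 0)
            = typeOf P) := by
    intro κ hκ
    have hκP : fiberPart κ = P := (Finset.mem_filter.1 hκ).2
    refine Finset.mem_filter.2 ⟨Finset.mem_univ _, ?_⟩
    have h := typeOf_fiberPart κ
    rw [hκP] at h
    exact h.symm
  calc ∑ κ ∈ Finset.univ.filter (fun κ : V → Fin N => fiberPart κ = P),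
        ∏ v : V, (X (κ v) : MvPolynomial (Fin N) ℤ)
      = ∑ κ ∈ Finset.univ.filter (fun κ : V → Fin N => fiberPart κ = P),
          ∏ i : Fin N, (X i : MvPolynomial (Fin N) ℤ) ^ ((fc κ i : ℕ)) :=
        Finset.sum_congr rfl fun κ _ => prod_X_eq κ
    _ = ∑ f ∈ Finset.univ.filter
          (fun f : Fin N → Fin ((typeOf P).sum + 1) =>
            ((Finset.univ.val.map fun i : Fin N => (f i : ℕ)).filter fun k => k ≠ 0)
              = typeOf P),
          ∑ κ ∈ (Finset.univ.filter (fun κ : V → Fin N => fiberPart κ = P)).filter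
            (fun κ => fc κ = f),
          ∏ i : Fin N, (X i : MvPolynomial (Fin N) ℤ) ^ ((fc κ i : ℕ)) :=
        (Finset.sum_fiberwise_of_maps_to hmap _).symm
    _ = ∑ f ∈ Finset.univ.filter
          (fun f : Fin N → Fin ((typeOf P).sum + 1) =>
            ((Finset.univ.val.map fun i : Fin N => (f i : ℕ)).filter fun k => k ≠ 0)
              = typeOf P),
          (multFact (typeOf P)) •
            ∏ i : Fin N, (X i : MvPolynomial (Fin N) ℤ) ^ ((f i : ℕ)) := by
        refine Finset.sum_congr rfl fun f hf => ?_
        have hstep : ∑ κ ∈ (Finset.univ.filter (fun κ : V → Fin N => fiberPart κ = P)).filter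
              (fun κ => fc κ = f),
            ∏ i : Fin N, (X i : MvPolynomial (Fin N) ℤ) ^ ((fc κ i : ℕ))
            = ∑ κ ∈ (Finset.univ.filter (fun κ : V → Fin N => fiberPart κ = P)).filter
              (fun κ => fc κ = f),
            ∏ i : Fin N, (X i : MvPolynomial (Fin N) ℤ) ^ ((f i : ℕ)) := by
          refine Finset.sum_congr rfl fun κ hκ => ?_
          have h := (Finset.mem_filter.1 hκ).2
          rw [h]
        rw [hstep, Finset.sum_const]
        congr 1
        rw [Finset.filter_filter]
        have hpred : ∀ κ : V → Fin N,
            (fiberPart κ = P ∧ fc κ = f) ↔ (fiberPart κ = P ∧ ∀ i, contf κ i = (f i : ℕ)) := by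
          intro κ
          constructor
          · rintro ⟨h1, h2⟩
            refine ⟨h1, fun i => ?_⟩
            have := congrFun h2 i
            exact congrArg Fin.val this
          · rintro ⟨h1, h2⟩
            refine ⟨h1, funext fun i => Fin.ext ?_⟩
            exact h2 i
        rw [Finset.filter_congr fun κ _ => hpred κ]
        refine card_fiber_content P (fun i => (f i : ℕ)) ?_
        exact (Finset.mem_filter.1 hf).2
    _ = (multFact (typeOf P) : ℤ) • mSym N (typeOf P) := by
        rw [mSym, ← Finset.smul_sum, natCast_zsmul]

end Main


end StanleyAux

open Classical in
/-- **Theorem (Stanley).** `X_G = Σ_π μ(π)^! · m_{μ(π)}`, the sum over all stable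
partitions `π` of `G`, where `μ(π)` is the type of `π`. -/
theorem csf_eq_sum_stable_partitions {V : Type} [Fintype V] [DecidableEq V]
    (G : SimpleGraph V) (N : ℕ) (hN : Fintype.card V ≤ N) :
    csf G N = ∑ P ∈ Finset.univ.filter
        (fun P : Finpartition (Finset.univ : Finset V) => IsStablePartition G P),
      (multFact (typeOf P) : ℤ) • mSym N (typeOf P) := by
  classical
  have h0 : csf G N = ∑ κ ∈ Finset.univ.filter
      (fun κ : V → Fin N => ∀ u v : V, G.Adj u v → κ u ≠ κ v),
      ∏ v : V, (X (κ v) : MvPolynomial (Fin N) ℤ) := by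
    unfold csf
    apply Finset.sum_congr
    · apply Finset.ext
      intro κ
      simp only [Finset.mem_filter, Finset.mem_univ, true_and]
    · intros
      rfl
  rw [h0]
  have hpred : ∀ κ : V → Fin N,
      (∀ u v : V, G.Adj u v → κ u ≠ κ v) ↔ IsStablePartition G (fiberPart κ) := by
    intro κ
    constructor
    · intro h b hb
      rw [parts_eq_image] at hb
      obtain ⟨a, -, rfl⟩ := Finset.mem_image.1 hb
      intro u hu v hv hadj
      rw [part_fiberPart] at hu hv
      have h1 : κ u = κ a := (Finset.mem_filter.1 hu).2
      have h2 : κ v = κ a := (Finset.mem_filter.1 hv).2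
      exact h u v hadj (h1.trans h2.symm)
    · intro h u v hadj heq
      have hb := (fiberPart κ).part_mem.2 (Finset.mem_univ u)
      refine h _ hb u ((fiberPart κ).mem_part (Finset.mem_univ u)) v ?_ hadj
      rw [part_fiberPart]
      exact Finset.mem_filter.2 ⟨Finset.mem_univ _, heq.symm⟩
  rw [Finset.filter_congr fun κ _ => hpred κ]
  have hmaps : ∀ κ ∈ Finset.univ.filter
      (fun κ : V → Fin N => IsStablePartition G (fiberPart κ)),
      fiberPart κ ∈ Finset.univ.filter
        (fun P : Finpartition (Finset.univ : Finset V) => IsStablePartition G P) :=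
    fun κ h => Finset.mem_filter.2 ⟨Finset.mem_univ _, (Finset.mem_filter.1 h).2⟩
  refine Eq.trans (Finset.sum_fiberwise_of_maps_to hmaps
    (fun κ => ∏ v : V, (X (κ v) : MvPolynomial (Fin N) ℤ))).symm ?_
  refine Finset.sum_congr rfl fun P hP => ?_
  have hP' : IsStablePartition G P := (Finset.mem_filter.1 hP).2
  have hfil : (Finset.univ.filter
        (fun κ : V → Fin N => IsStablePartition G (fiberPart κ))).filter
        (fun κ => fiberPart κ = P)
      = Finset.univ.filter (fun κ : V → Fin N => fiberPart κ = P) := by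
    rw [Finset.filter_filter]
    refine Finset.filter_congr fun κ _ => ?_
    constructor
    · rintro ⟨-, h2⟩
      exact h2
    · intro h
      exact ⟨h ▸ hP', h⟩
  rw [hfil, inner_sum_eq]
end

section
/- Let G be a Schur positive finite simple graph. If G has a stable partition of type λ, then G has a stable partition of type μ for every partition μ of |V(G)| that is dominated by λ. -/
open Finset MvPolynomial

/-- `μ` is dominated by `λ`: every partial sum of the parts of `μ` (in weakly
decreasing order) is at most the corresponding partial sum for `λ`. -/
def Dominates {n : ℕ} (lam mu : n.Partition) : Prop :=
  ∀ t : ℕ, ((mu.parts.sort (· ≥ ·)).take t).sum ≤ ((lam.parts.sort (· ≥ ·)).take t).sum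

/-! ### Auxiliary machinery -/

section Aux

open Finset MvPolynomial

/-! #### Sequence lemmas -/

lemma anti_le' {ν : ℕ → ℕ} (hν : ∀ r, ν (r+1) ≤ ν r) :
    ∀ {a b : ℕ}, a ≤ b → ν b ≤ ν a := by
  intro a b h
  induction b, h using Nat.le_induction with
  | base => exact le_refl _
  | succ n hn ih => exact le_trans (hν n) ih

lemma sum_range_eq_of_zero' {f : ℕ → ℕ} {k t : ℕ} (hkt : k ≤ t)
    (h0 : ∀ r, k ≤ r → f r = 0) :
    ∑ r ∈ range t, f r = ∑ r ∈ range k, f r := by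
  induction t, hkt using Nat.le_induction with
  | base => rfl
  | succ n hn ih => rw [Finset.sum_range_succ, h0 n hn, ih, add_zero]

lemma sum_range_sub' {f g : ℕ → ℕ} (h : ∀ r, g r ≤ f r) (t : ℕ) :
    ∑ r ∈ range t, (f r - g r) = ∑ r ∈ range t, f r - ∑ r ∈ range t, g r := by
  induction t with
  | zero => simp
  | succ n ihn =>
      rw [Finset.sum_range_succ, Finset.sum_range_succ, Finset.sum_range_succ, ihn]
      have h1 : ∑ r ∈ range n, g r ≤ ∑ r ∈ range n, f r :=
        Finset.sum_le_sum (fun r _ => h r)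
      have := h n
      omega

lemma telescope' (ν : ℕ → ℕ) (m : ℕ) (t : ℕ) :
    ∑ r ∈ range t, ((ν r - m) + min m (ν (r+1))) + min m (ν 0)
      = ∑ r ∈ range t, ν r + min m (ν t) := by
  induction t with
  | zero => simp
  | succ n ih =>
      rw [Finset.sum_range_succ, Finset.sum_range_succ]
      rcases le_total m (ν n) with h | h
      · rw [min_eq_left h] at ih
        have h2 : min m (ν (n+1)) ≤ m := min_le_left _ _
        omega
      · rw [min_eq_right h] at ih
        omega

/-! #### The core semistandard filling construction -/

lemma exists_filling : ∀ (k : ℕ) (ν μ : ℕ → ℕ),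
    (∀ r, ν (r+1) ≤ ν r) → (∀ r, μ (r+1) ≤ μ r) →
    (∀ r, k ≤ r → μ r = 0) → (∀ r, k ≤ r → ν r = 0) →
    (∀ t, ∑ r ∈ range t, μ r ≤ ∑ r ∈ range t, ν r) →
    (∑ r ∈ range k, ν r ≤ ∑ r ∈ range k, μ r) →
    ∃ T : ℕ × ℕ → ℕ,
      (∀ r c, c + 1 < ν r → T (r,c) ≤ T (r,c+1)) ∧
      (∀ r c, c < ν (r+1) → T (r,c) < T (r+1,c)) ∧
      (∀ r c, c < ν r → T (r,c) < k) ∧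
      (∀ i, ∑ r ∈ range k, ((range (ν r)).filter (fun c => T (r,c) = i)).card = μ i) := by
  intro k
  induction k with
  | zero =>
      intro ν μ hν hμ hμ0 hν0 hdom heq
      refine ⟨fun _ => 0, ?_, ?_, ?_, ?_⟩
      · intro r c h; have := hν0 r (Nat.zero_le _); omega
      · intro r c h; have := hν0 (r+1) (Nat.zero_le _); omega
      · intro r c h; have := hν0 r (Nat.zero_le _); omega
      · intro i; simp [hμ0 i (Nat.zero_le _)]
  | succ k ih =>
      intro ν μ hν hμ hμ0 hν0 hdom heq
      set m := μ k with hm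
      set νt : ℕ → ℕ := fun r => (ν r - m) + min m (ν (r+1)) with hνt
      set μt : ℕ → ℕ := fun r => if r < k then μ r else 0 with hμt
      have hmν0 : m ≤ ν 0 := by
        have h1 := hdom 1
        simp only [Finset.sum_range_one] at h1
        exact le_trans (anti_le' hμ (Nat.zero_le k)) h1
      have hνk : ν k ≤ m := by
        have h2 := heq
        rw [Finset.sum_range_succ, Finset.sum_range_succ] at h2
        have h1 := hdom k
        omega
      have hνtν : ∀ r, νt r ≤ ν r := by
        intro r
        show (ν r - m) + min m (ν (r+1)) ≤ ν r
        have h1 := hν r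
        have h2 : min m (ν (r+1)) ≤ ν (r+1) := min_le_right _ _
        have h3 : min m (ν (r+1)) ≤ m := min_le_left _ _
        omega
      have hνt_ge : ∀ r, ν (r+1) ≤ νt r := by
        intro r
        show ν (r+1) ≤ (ν r - m) + min m (ν (r+1))
        have h1 := hν r
        rcases le_total m (ν (r+1)) with h | h
        · rw [min_eq_left h]; omega
        · rw [min_eq_right h]; omega
      have hνt_anti : ∀ r, νt (r+1) ≤ νt r := by
        intro r
        show (ν (r+1) - m) + min m (ν (r+1+1)) ≤ (ν r - m) + min m (ν (r+1))
        have h1 := hν r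
        have h3 : min m (ν (r+1+1)) ≤ min m (ν (r+1)) :=
          min_le_min le_rfl (hν (r+1))
        omega
      have hμt_anti : ∀ r, μt (r+1) ≤ μt r := by
        intro r
        have h1 := hμ r
        show (if r+1 < k then μ (r+1) else 0) ≤ (if r < k then μ r else 0)
        split <;> split <;> omega
      have hμt0 : ∀ r, k ≤ r → μt r = 0 := by
        intro r hr; show (if r < k then μ r else 0) = 0; rw [if_neg (by omega)]
      have hνt0 : ∀ r, k ≤ r → νt r = 0 := by
        intro r hr
        have h1 : ν r ≤ m := le_trans (anti_le' hν hr) hνk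
        have h2 : ν (r+1) = 0 := hν0 (r+1) (by omega)
        show (ν r - m) + min m (ν (r+1)) = 0
        rw [h2]
        simp
        omega
      have hμtsum : ∀ t, t ≤ k → ∑ r ∈ range t, μt r = ∑ r ∈ range t, μ r := by
        intro t ht
        apply Finset.sum_congr rfl
        intro x hx
        rw [Finset.mem_range] at hx
        show (if x < k then μ x else 0) = μ x
        rw [if_pos (by omega)]
      have htel : ∀ t, ∑ r ∈ range t, νt r + m = ∑ r ∈ range t, ν r + min m (ν t) := by
        intro t
        have h := telescope' ν m t
        rw [min_eq_left hmν0] at h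
        exact h
      have hdomt : ∀ t, ∑ r ∈ range t, μt r ≤ ∑ r ∈ range t, νt r := by
        intro t
        rcases le_or_gt t k with ht | ht
        · rw [hμtsum t ht]
          have h1 := htel t
          rcases le_total m (ν t) with hc | hc
          · rw [min_eq_left hc] at h1
            have := hdom t; omega
          · rw [min_eq_right hc] at h1
            have h2 := hdom (t+1)
            rw [Finset.sum_range_succ, Finset.sum_range_succ] at h2
            have h3 : m ≤ μ t := anti_le' hμ ht
            omega
        · rw [sum_range_eq_of_zero' (le_of_lt ht) hμt0,
              sum_range_eq_of_zero' (le_of_lt ht) hνt0]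
          rw [hμtsum k le_rfl]
          have h1 := htel k
          rw [min_eq_right hνk] at h1
          have h2 := hdom (k+1)
          rw [Finset.sum_range_succ, Finset.sum_range_succ] at h2
          omega
      have heqt : ∑ r ∈ range k, νt r ≤ ∑ r ∈ range k, μt r := by
        rw [hμtsum k le_rfl]
        have h1 := htel k
        rw [min_eq_right hνk] at h1
        have h2 := heq
        rw [Finset.sum_range_succ, Finset.sum_range_succ] at h2
        omega
      obtain ⟨Tt, hrowt, hcolt, hboundt, hcontentt⟩ :=
        ih νt μt hνt_anti hμt_anti hμt0 hνt0 hdomt heqt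
      refine ⟨fun p => if p.2 < νt p.1 then Tt p else k, ?_, ?_, ?_, ?_⟩
      · intro r c hc
        show (if c < νt r then Tt (r,c) else k) ≤ (if c+1 < νt r then Tt (r,c+1) else k)
        rcases lt_or_ge (c+1) (νt r) with h | h
        · rw [if_pos (by omega : c < νt r), if_pos h]
          exact hrowt r c h
        · rw [if_neg (by omega : ¬ c+1 < νt r)]
          rcases lt_or_ge c (νt r) with h2 | h2
          · rw [if_pos h2]; exact le_of_lt (hboundt r c h2)
          · rw [if_neg (by omega : ¬ c < νt r)]
      · intro r c hc
        show (if c < νt r then Tt (r,c) else k) < (if c < νt (r+1) then Tt (r+1,c) else k)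
        rcases lt_or_ge c (νt (r+1)) with h | h
        · rw [if_pos (lt_of_lt_of_le h (hνt_anti r)), if_pos h]
          exact hcolt r c h
        · have hcr : c < νt r := lt_of_lt_of_le hc (hνt_ge r)
          rw [if_pos hcr, if_neg (by omega : ¬ c < νt (r+1))]
          exact hboundt r c hcr
      · intro r c hc
        show (if c < νt r then Tt (r,c) else k) < k + 1
        rcases lt_or_ge c (νt r) with h | h
        · rw [if_pos h]; exact lt_trans (hboundt r c h) (Nat.lt_succ_self k)
        · rw [if_neg (by omega : ¬ c < νt r)]; exact Nat.lt_succ_self k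
      · intro i
        rcases lt_trichotomy i k with hik | hik | hik
        · have hrowi : ∀ r, ((range (ν r)).filter
              (fun c => (if c < νt r then Tt (r,c) else k) = i)).card
              = ((range (νt r)).filter (fun c => Tt (r,c) = i)).card := by
            intro r
            congr 1
            ext c
            simp only [Finset.mem_filter, Finset.mem_range]
            constructor
            · rintro ⟨h1, h2⟩
              rcases lt_or_ge c (νt r) with h3 | h3
              · rw [if_pos h3] at h2; exact ⟨h3, h2⟩
              · rw [if_neg (by omega : ¬ c < νt r)] at h2; omega
            · rintro ⟨h1, h2⟩
              exact ⟨lt_of_lt_of_le h1 (hνtν r), by rw [if_pos h1]; exact h2⟩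
          calc ∑ r ∈ range (k+1), ((range (ν r)).filter
                (fun c => (if c < νt r then Tt (r,c) else k) = i)).card
              = ∑ r ∈ range (k+1), ((range (νt r)).filter (fun c => Tt (r,c) = i)).card :=
                Finset.sum_congr rfl (fun r _ => hrowi r)
            _ = ∑ r ∈ range k, ((range (νt r)).filter (fun c => Tt (r,c) = i)).card := by
                rw [Finset.sum_range_succ, hνt0 k le_rfl]; simp
            _ = μt i := hcontentt i
            _ = μ i := by show (if i < k then μ i else 0) = μ i; rw [if_pos hik]
        · rw [hik]
          have hrowi : ∀ r, ((range (ν r)).filter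
              (fun c => (if c < νt r then Tt (r,c) else k) = k)).card
              = ν r - νt r := by
            intro r
            have he : ((range (ν r)).filter
                (fun c => (if c < νt r then Tt (r,c) else k) = k))
                = (range (ν r)) \ (range (νt r)) := by
              ext c
              simp only [Finset.mem_filter, Finset.mem_range, Finset.mem_sdiff]
              constructor
              · rintro ⟨h1, h2⟩
                refine ⟨h1, ?_⟩
                intro h3
                rw [if_pos h3] at h2
                exact absurd h2 (Nat.ne_of_lt (hboundt r c h3))
              · rintro ⟨h1, h2⟩
                exact ⟨h1, by rw [if_neg h2]⟩
            rw [he, Finset.card_sdiff_of_subset (Finset.range_subset_range.mpr (hνtν r))]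
            simp
          rw [Finset.sum_congr rfl (fun r _ => hrowi r)]
          rw [sum_range_sub' hνtν (k+1)]
          have h1 := htel (k+1)
          rw [hν0 (k+1) le_rfl, min_eq_right (Nat.zero_le m)] at h1
          have h2 : ∑ r ∈ range (k+1), νt r ≤ ∑ r ∈ range (k+1), ν r :=
            Finset.sum_le_sum (fun r _ => hνtν r)
          omega
        · have hrowi : ∀ r, ((range (ν r)).filter
              (fun c => (if c < νt r then Tt (r,c) else k) = i)).card = 0 := by
            intro r
            rw [Finset.card_eq_zero]
            ext c
            simp only [Finset.mem_filter, Finset.mem_range, Finset.notMem_empty,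
              iff_false, not_and]
            intro h1
            rcases lt_or_ge c (νt r) with h3 | h3
            · rw [if_pos h3]; exact Nat.ne_of_lt (lt_trans (hboundt r c h3) hik)
            · rw [if_neg (by omega : ¬ c < νt r)]; omega
          rw [Finset.sum_congr rfl (fun r _ => hrowi r), Finset.sum_const_zero]
          exact (hμ0 i (by omega)).symm

/-! #### Monomial coefficient extraction -/

lemma prod_X_eq_s3 {σ A : Type*} (s : Finset A) (f : A → σ) :
    (∏ v ∈ s, (X (f v) : MvPolynomial σ ℤ))
      = monomial (∑ v ∈ s, Finsupp.single (f v) 1) 1 := by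
  classical
  induction s using Finset.cons_induction with
  | empty => simp
  | cons a s ha ih =>
      rw [Finset.prod_cons, Finset.sum_cons, ih, X, monomial_mul, one_mul]

lemma content_apply {σ A : Type*} [DecidableEq σ] [Fintype A]
    (f : A → σ) (i : σ) :
    (∑ v : A, Finsupp.single (f v) 1) i
      = ((Finset.univ :  Finset A).filter (fun v => f v = i)).card := by
  classical
  rw [Finset.card_filter, Finsupp.finset_sum_apply]
  apply Finset.sum_congr rfl
  intro v _
  rw [Finsupp.single_apply]

lemma coeff_sum_monomial {σ A : Type*} [DecidableEq σ] (S : Finset A)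
    (g : A → (σ →₀ ℕ)) (m : σ →₀ ℕ) :
    coeff m (∑ a ∈ S, (monomial (g a) (1:ℤ)))
      = ((S.filter (fun a => g a = m)).card : ℤ) := by
  classical
  rw [MvPolynomial.coeff_sum, Finset.card_filter]
  push_cast
  apply Finset.sum_congr rfl
  intro a _
  rw [coeff_monomial]

lemma coeff_sum_monomial_nonneg {σ A : Type*} [DecidableEq σ] (S : Finset A)
    (g : A → (σ →₀ ℕ)) (m : σ →₀ ℕ) :
    0 ≤ coeff m (∑ a ∈ S, (monomial (g a) (1:ℤ))) := by
  rw [coeff_sum_monomial]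
  exact Int.natCast_nonneg _

lemma coeff_sum_monomial_pos {σ A : Type*} [DecidableEq σ] (S : Finset A)
    (g : A → (σ →₀ ℕ)) (m : σ →₀ ℕ) :
    0 < coeff m (∑ a ∈ S, (monomial (g a) (1:ℤ))) ↔ ∃ a ∈ S, g a = m := by
  classical
  rw [coeff_sum_monomial]
  rw [Int.natCast_pos, Finset.card_pos]
  constructor
  · rintro ⟨a, ha⟩
    rw [Finset.mem_filter] at ha
    exact ⟨a, ha.1, ha.2⟩
  · rintro ⟨a, ha, hg⟩
    exact ⟨a, Finset.mem_filter.mpr ⟨ha, hg⟩⟩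

/-! #### Partition sequences -/

/-- The weakly decreasing sequence of parts of a partition, padded with zeros. -/
def pseq {n : ℕ} (p : n.Partition) : ℕ → ℕ :=
  fun r => (p.parts.sort (· ≥ ·)).getD r 0

lemma pseq_anti {n : ℕ} (p : n.Partition) : ∀ r, pseq p (r+1) ≤ pseq p r := by
  intro r
  unfold pseq
  set l := p.parts.sort (· ≥ ·) with hl
  rcases lt_or_ge (r+1) l.length with h | h
  · rw [List.getD_eq_getElem l 0 h, List.getD_eq_getElem l 0 (by omega)]
    have hs : l.Pairwise (· ≥ ·) := p.parts.pairwise_sort _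
    exact hs.rel_get_of_lt (show (⟨r, by omega⟩ : Fin l.length) < ⟨r+1, h⟩ by
      simp [Fin.lt_def])
  · rw [List.getD_eq_default l 0 h]
    exact Nat.zero_le _

lemma pseq_zero {n : ℕ} (p : n.Partition) {r : ℕ}
    (h : (p.parts.sort (· ≥ ·)).length ≤ r) : pseq p r = 0 :=
  List.getD_eq_default _ _ h

lemma pseq_pos {n : ℕ} (p : n.Partition) {r : ℕ}
    (h : r < (p.parts.sort (· ≥ ·)).length) : 0 < pseq p r := by
  unfold pseq
  rw [List.getD_eq_getElem _ 0 h]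
  apply p.parts_pos
  have : (p.parts.sort (· ≥ ·))[r] ∈ p.parts.sort (· ≥ ·) := List.getElem_mem _
  rwa [← Multiset.mem_coe, Multiset.sort_eq] at this

lemma take_sum_eq_sum_range (l : List ℕ) :
    ∀ t, (l.take t).sum = ∑ r ∈ range t, l.getD r 0 := by
  induction l with
  | nil => intro t; simp
  | cons a l ih =>
      intro t
      cases t with
      | zero => simp
      | succ t =>
          rw [List.take_succ_cons, List.sum_cons, Finset.sum_range_succ']
          simp only [List.getD_cons_succ, List.getD_cons_zero, ih t]
          exact Nat.add_comm _ _

lemma pseq_sum_range {n : ℕ} (p : n.Partition) (t : ℕ) :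
    ∑ r ∈ range t, pseq p r = ((p.parts.sort (· ≥ ·)).take t).sum :=
  (take_sum_eq_sum_range _ t).symm

lemma sort_sum {n : ℕ} (p : n.Partition) : (p.parts.sort (· ≥ ·)).sum = n := by
  have : ((p.parts.sort (· ≥ ·) : Multiset ℕ)).sum = p.parts.sum := by
    rw [Multiset.sort_eq]
  rw [Multiset.sum_coe] at this
  rw [this, p.parts_sum]

lemma pseq_sum_of_le {n : ℕ} (p : n.Partition) {t : ℕ}
    (h : (p.parts.sort (· ≥ ·)).length ≤ t) :
    ∑ r ∈ range t, pseq p r = n := by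
  rw [pseq_sum_range, List.take_of_length_le h, sort_sum]

lemma parts_length_le {n : ℕ} (p : n.Partition) :
    (p.parts.sort (· ≥ ·)).length ≤ n := by
  rw [Multiset.length_sort]
  have h := Multiset.card_nsmul_le_sum (s := p.parts) (a := 1)
    (fun x hx => p.parts_pos hx)
  rw [smul_eq_mul, mul_one, p.parts_sum] at h
  exact h

lemma pseq_sum_le_n {n : ℕ} (p : n.Partition) (t : ℕ) :
    ∑ r ∈ range t, pseq p r ≤ n := by
  rcases le_or_gt (p.parts.sort (· ≥ ·)).length t with h | h
  · rw [pseq_sum_of_le p h]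
  · calc ∑ r ∈ range t, pseq p r
        ≤ ∑ r ∈ range (p.parts.sort (· ≥ ·)).length, pseq p r :=
          Finset.sum_le_sum_of_subset (Finset.range_subset_range.mpr (le_of_lt h))
      _ = n := pseq_sum_of_le p le_rfl

lemma dominates_iff {n : ℕ} (p q : n.Partition) :
    Dominates p q ↔ ∀ t, ∑ r ∈ range t, pseq q r ≤ ∑ r ∈ range t, pseq p r := by
  unfold Dominates
  constructor
  · intro h t; rw [pseq_sum_range, pseq_sum_range]; exact h t
  · intro h t
    have := h t
    rwa [pseq_sum_range, pseq_sum_range] at this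

/-- The content (as a finitely supported function on colors) of a partition. -/
noncomputable def contentP (N : ℕ) {n : ℕ} (q : n.Partition) : Fin N →₀ ℕ :=
  Finsupp.equivFunOnFinite.symm (fun i => pseq q i)

lemma contentP_apply (N : ℕ) {n : ℕ} (q : n.Partition) (i : Fin N) :
    contentP N q i = pseq q (i : ℕ) := by
  unfold contentP
  rfl

/-! #### Diagram membership -/

lemma mem_diagramOf {n : ℕ} (p : n.Partition) (r c : ℕ) :
    (r, c) ∈ diagramOf p ↔ c < pseq p r := by
  unfold diagramOf pseq
  rw [YoungDiagram.mem_ofRowLens]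
  constructor
  · rintro ⟨h, h2⟩
    rwa [List.getD_eq_getElem _ 0 h]
  · intro h
    rcases lt_or_ge r (p.parts.sort (· ≥ ·)).length with hr | hr
    · exact ⟨hr, by rwa [List.getD_eq_getElem _ 0 hr] at h⟩
    · rw [List.getD_eq_default _ _ hr] at h; omega

lemma pseq_zero_of_dominates {n : ℕ} {p q : n.Partition}
    (hdom : Dominates p q) {r : ℕ}
    (hr : (q.parts.sort (· ≥ ·)).length ≤ r) : pseq p r = 0 := by
  set kq := (q.parts.sort (· ≥ ·)).length with hkq
  have h1 : ∑ x ∈ range kq, pseq q x = n := pseq_sum_of_le q le_rfl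
  have h2 : n ≤ ∑ x ∈ range kq, pseq p x := by
    have h2' := (dominates_iff p q).mp hdom kq
    omega
  have h3 : ∑ x ∈ range kq, pseq p x = n :=
    le_antisymm (pseq_sum_le_n p kq) h2
  have h4 : ∑ x ∈ range (r+1), pseq p x ≤ n := pseq_sum_le_n p (r+1)
  have h5 : ∑ x ∈ range kq, pseq p x ≤ ∑ x ∈ range r, pseq p x :=
    Finset.sum_le_sum_of_subset (Finset.range_subset_range.mpr hr)
  rw [Finset.sum_range_succ] at h4
  omega

/-! #### From dominance to a semistandard tableau -/

lemma exists_ssyt_of_dominates {n N : ℕ} (hN : n ≤ N) (p q : n.Partition)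
    (hdom : Dominates p q) :
    ∃ T : (diagramOf p).cells → Fin N, IsSSYTof (diagramOf p) N T ∧
      ∀ i : Fin N,
        ((Finset.univ : Finset (diagramOf p).cells).filter
          (fun c => T c = i)).card = pseq q (i : ℕ) := by
  classical
  set kq := (q.parts.sort (· ≥ ·)).length with hkq
  have hν0 : ∀ r, kq ≤ r → pseq p r = 0 := fun r hr => pseq_zero_of_dominates hdom hr
  have hμ0 : ∀ r, kq ≤ r → pseq q r = 0 := fun r hr => pseq_zero q hr
  have hdom' := (dominates_iff p q).mp hdom
  have heq : ∑ r ∈ range kq, pseq p r ≤ ∑ r ∈ range kq, pseq q r := by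
    rw [pseq_sum_of_le q le_rfl]
    exact pseq_sum_le_n p kq
  obtain ⟨T0, hrow, hcol, hbound, hcontent⟩ :=
    exists_filling kq (pseq p) (pseq q) (pseq_anti p) (pseq_anti q) hμ0 hν0 hdom' heq
  have hkqN : kq ≤ N := le_trans (parts_length_le q) hN
  -- monotone versions
  have hrow' : ∀ r c d, c ≤ d → d < pseq p r → T0 (r,c) ≤ T0 (r,d) := by
    intro r c d hcd
    induction d, hcd using Nat.le_induction with
    | base => intro _; exact le_rfl
    | succ d hcd ihd =>
        intro hlt
        exact le_trans (ihd (by have := pseq_anti p; omega)) (hrow r d hlt)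
  have hcol' : ∀ r s c, r < s → c < pseq p s → T0 (r,c) < T0 (s,c) := by
    intro r s c hrs
    induction s, hrs using Nat.le_induction with
    | base => exact hcol r c
    | succ s hrs ihs =>
        intro hc
        have hc' : c < pseq p s := lt_of_lt_of_le hc (pseq_anti p s)
        exact lt_trans (ihs hc') (hcol s c hc)
  have hboundN : ∀ cell : (diagramOf p).cells, T0 cell.val < N := by
    rintro ⟨⟨r, c⟩, hcell⟩
    have : (r, c) ∈ diagramOf p := (YoungDiagram.mem_cells _).mp hcell
    rw [mem_diagramOf] at this
    exact lt_of_lt_of_le (hbound r c this) hkqN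
  refine ⟨fun cell => ⟨T0 cell.val, hboundN cell⟩, ⟨?_, ?_⟩, ?_⟩
  · rintro ⟨⟨r, c⟩, hc⟩ ⟨⟨r', d⟩, hd⟩ h1 h2
    simp only at h1 h2
    subst h1
    have hdmem : (r, d) ∈ diagramOf p := (YoungDiagram.mem_cells _).mp hd
    rw [mem_diagramOf] at hdmem
    exact hrow' r c d h2 hdmem
  · rintro ⟨⟨r, c⟩, hc⟩ ⟨⟨s, d⟩, hd⟩ h1 h2
    simp only at h1 h2
    subst h1
    have hdmem : (s, c) ∈ diagramOf p := (YoungDiagram.mem_cells _).mp hd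
    rw [mem_diagramOf] at hdmem
    exact hcol' r s c h2 hdmem
  · intro i
    -- counting
    have step1 : ((Finset.univ : Finset (diagramOf p).cells).filter
        (fun cell => (⟨T0 cell.val, hboundN cell⟩ : Fin N) = i)).card
        = ((diagramOf p).cells.filter (fun x => T0 x = (i : ℕ))).card := by
      apply Finset.card_bij (fun cell _ => cell.val)
      · rintro ⟨x, hx⟩ hmem
        rw [Finset.mem_filter] at hmem ⊢
        refine ⟨hx, ?_⟩
        have := hmem.2
        rw [Fin.ext_iff] at this
        exact this
      · rintro ⟨x, hx⟩ _ ⟨y, hy⟩ _ h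
        simpa using h
      · intro x hx
        rw [Finset.mem_filter] at hx
        refine ⟨⟨x, hx.1⟩, ?_, rfl⟩
        rw [Finset.mem_filter]
        exact ⟨Finset.mem_univ _, by rw [Fin.ext_iff]; exact hx.2⟩
    rw [step1]
    have step2 : ((diagramOf p).cells.filter (fun x => T0 x = (i : ℕ))).card
        = ∑ r ∈ range kq,
            ((range (pseq p r)).filter (fun c => T0 (r, c) = (i : ℕ))).card := by
      rw [Finset.card_eq_sum_card_fiberwise
        (f := fun (x : ℕ × ℕ) => x.1) (t := range kq) ?_]
      · apply Finset.sum_congr rfl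
        intro r _
        apply Finset.card_bij (fun x _ => x.2)
        · rintro ⟨a, b⟩ hmem
          rw [Finset.mem_filter, Finset.mem_filter, YoungDiagram.mem_cells] at hmem
          obtain ⟨⟨hmem1, hmem2⟩, hmem3⟩ := hmem
          simp only at hmem3
          subst hmem3
          rw [mem_diagramOf] at hmem1
          rw [Finset.mem_filter, Finset.mem_range]
          exact ⟨hmem1, hmem2⟩
        · rintro ⟨a, b⟩ ha ⟨a', b'⟩ ha' h
          rw [Finset.mem_filter] at ha ha'
          simp only at h ha ha'
          rw [Prod.ext_iff]
          exact ⟨ha.2.trans ha'.2.symm, h⟩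
        · intro b hb
          rw [Finset.mem_filter, Finset.mem_range] at hb
          refine ⟨(r, b), ?_, rfl⟩
          rw [Finset.mem_filter, Finset.mem_filter, YoungDiagram.mem_cells,
            mem_diagramOf]
          exact ⟨⟨hb.1, hb.2⟩, rfl⟩
      · rintro ⟨a, b⟩ hmem
        rw [Finset.mem_coe, Finset.mem_filter, YoungDiagram.mem_cells, mem_diagramOf] at hmem
        rw [Finset.mem_coe, Finset.mem_range]
        show a < kq
        by_contra hcon
        rw [hν0 a (by omega)] at hmem
        omega
    rw [step2]
    exact hcontent (i : ℕ)

end Aux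


/-! #### Dominance from a semistandard tableau -/

open Finset MvPolynomial in
lemma entry_ge_row {n N : ℕ} (p : n.Partition) (T : (diagramOf p).cells → Fin N)
    (hT : IsSSYTof (diagramOf p) N T) :
    ∀ r c (h : (r, c) ∈ (diagramOf p).cells), r ≤ (T ⟨(r,c), h⟩ : ℕ) := by
  intro r
  induction r with
  | zero => intro c h; exact Nat.zero_le _
  | succ r ihr =>
      intro c h
      have h' : (r, c) ∈ (diagramOf p).cells := by
        rw [YoungDiagram.mem_cells] at h ⊢
        exact (diagramOf p).up_left_mem (by omega) le_rfl h
      have hlt := hT.2 ⟨(r,c), h'⟩ ⟨(r+1,c), h⟩ rfl (Nat.lt_succ_self r)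
      have := ihr c h'
      rw [Fin.lt_def] at hlt
      omega

open Finset MvPolynomial in
lemma dominates_of_ssyt {n N : ℕ} (hN : n ≤ N) (p q : n.Partition)
    (T : (diagramOf p).cells → Fin N) (hT : IsSSYTof (diagramOf p) N T)
    (hcont : ∀ i : Fin N, ((Finset.univ : Finset (diagramOf p).cells).filter
        (fun c => T c = i)).card = pseq q (i : ℕ)) :
    Dominates p q := by
  classical
  rw [dominates_iff]
  intro t
  rcases le_or_gt t N with htN | htN
  swap
  · have h1 : ∑ r ∈ range t, pseq q r ≤ n := pseq_sum_le_n q t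
    have h2 : ∑ r ∈ range t, pseq p r = n :=
      pseq_sum_of_le p (le_trans (parts_length_le p) (by omega))
    omega
  set S := (Finset.univ : Finset (diagramOf p).cells).filter
    (fun cell => (T cell : ℕ) < t) with hS
  have hcard1 : S.card = ∑ r ∈ range t, pseq q r := by
    rw [Finset.card_eq_sum_card_fiberwise
      (f := fun cell => (T cell : ℕ)) (t := range t)
      (fun cell hcell => by
        rw [Finset.mem_coe, hS, Finset.mem_filter] at hcell
        exact Finset.mem_range.mpr hcell.2)]
    apply Finset.sum_congr rfl
    intro b hb
    have hbN : b < N := lt_of_lt_of_le (Finset.mem_range.mp hb) htN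
    have : S.filter (fun cell => (T cell : ℕ) = b)
        = (Finset.univ : Finset (diagramOf p).cells).filter
            (fun cell => T cell = ⟨b, hbN⟩) := by
      ext cell
      rw [hS, Finset.filter_filter, Finset.mem_filter, Finset.mem_filter]
      constructor
      · rintro ⟨h1, h2, h3⟩
        exact ⟨h1, Fin.ext h3⟩
      · rintro ⟨h1, h2⟩
        rw [Fin.ext_iff] at h2
        refine ⟨h1, ?_, h2⟩
        rw [h2]
        exact Finset.mem_range.mp hb
    rw [this, hcont ⟨b, hbN⟩]
  have hsub : S ⊆ (Finset.univ : Finset (diagramOf p).cells).filter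
      (fun cell => cell.val.1 < t) := by
    intro cell hcell
    rw [hS, Finset.mem_filter] at hcell
    rw [Finset.mem_filter]
    refine ⟨Finset.mem_univ _, ?_⟩
    obtain ⟨⟨r, c⟩, hmem⟩ := cell
    have := entry_ge_row p T hT r c hmem
    have h2 := hcell.2
    show r < t
    omega
  have hcard2 : ((Finset.univ : Finset (diagramOf p).cells).filter
      (fun cell => cell.val.1 < t)).card = ∑ r ∈ range t, pseq p r := by
    rw [Finset.card_eq_sum_card_fiberwise
      (f := fun cell => cell.val.1) (t := range t)
      (fun cell hcell => by
        rw [Finset.mem_coe, Finset.mem_filter] at hcell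
        exact Finset.mem_range.mpr hcell.2)]
    apply Finset.sum_congr rfl
    intro r hr
    rw [← Finset.card_range (pseq p r)]
    apply Finset.card_bij (fun cell _ => cell.val.2)
    · rintro ⟨⟨a, b⟩, hmem⟩ hmem2
      rw [Finset.mem_filter, Finset.mem_filter] at hmem2
      obtain ⟨⟨_, _⟩, h3⟩ := hmem2
      simp only at h3
      subst h3
      have := (YoungDiagram.mem_cells _).mp hmem
      rw [mem_diagramOf] at this
      exact Finset.mem_range.mpr this
    · rintro ⟨⟨a, b⟩, hm⟩ ha ⟨⟨a', b'⟩, hm'⟩ ha' h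
      rw [Finset.mem_filter, Finset.mem_filter] at ha ha'
      simp only at h ha ha'
      apply Subtype.ext
      rw [Prod.ext_iff]
      exact ⟨ha.2.trans ha'.2.symm, h⟩
    · intro b hb
      have hmem : (r, b) ∈ (diagramOf p).cells := by
        rw [YoungDiagram.mem_cells, mem_diagramOf]
        exact Finset.mem_range.mp hb
      refine ⟨⟨(r, b), hmem⟩, ?_, rfl⟩
      rw [Finset.mem_filter, Finset.mem_filter]
      exact ⟨⟨Finset.mem_univ _, Finset.mem_range.mp hr⟩, rfl⟩
  calc ∑ r ∈ range t, pseq q r = S.card := hcard1.symm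
    _ ≤ _ := Finset.card_le_card hsub
    _ = ∑ r ∈ range t, pseq p r := hcard2

/-! #### Coefficients of `csf` and `schur` -/

open Finset MvPolynomial in
lemma csf_eq_sum_monomial {V : Type} [Fintype V] (G : SimpleGraph V) (N : ℕ) :
    ∃ S : Finset (V → Fin N),
      (∀ κ, κ ∈ S ↔ ∀ u v : V, G.Adj u v → κ u ≠ κ v) ∧
      csf G N = ∑ κ ∈ S, monomial (∑ v : V, Finsupp.single (κ v) 1) (1:ℤ) := by
  classical
  unfold csf
  refine ⟨_, ?_, Finset.sum_congr rfl (fun κ _ => prod_X_eq_s3 univ κ)⟩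
  intro κ
  rw [Finset.mem_filter]
  simp

open Finset MvPolynomial in
lemma schurShape_eq_sum_monomial (N : ℕ) (D : YoungDiagram) :
    ∃ S : Finset (D.cells → Fin N),
      (∀ T, T ∈ S ↔ IsSSYTof D N T) ∧
      schurShape N D = ∑ T ∈ S, monomial (∑ c : D.cells, Finsupp.single (T c) 1) (1:ℤ) := by
  classical
  unfold schurShape
  refine ⟨_, ?_, Finset.sum_congr rfl (fun T _ => prod_X_eq_s3 univ T)⟩
  intro T
  rw [Finset.mem_filter]
  simp

open Finset MvPolynomial in
lemma csf_coeff_pos_iff {V : Type} [Fintype V] (G : SimpleGraph V) (N : ℕ)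
    (m : Fin N →₀ ℕ) :
    0 < coeff m (csf G N) ↔ ∃ κ : V → Fin N,
      (∀ u v : V, G.Adj u v → κ u ≠ κ v) ∧ (∑ v : V, Finsupp.single (κ v) 1) = m := by
  obtain ⟨S, hS, hrw⟩ := csf_eq_sum_monomial G N
  rw [hrw, coeff_sum_monomial_pos]
  constructor
  · rintro ⟨κ, h1, h2⟩; exact ⟨κ, (hS κ).mp h1, h2⟩
  · rintro ⟨κ, h1, h2⟩; exact ⟨κ, (hS κ).mpr h1, h2⟩

open Finset MvPolynomial in
lemma schur_coeff_nonneg (N : ℕ) {n : ℕ} (p : n.Partition) (m : Fin N →₀ ℕ) :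
    0 ≤ coeff m (schur N p) := by
  obtain ⟨S, hS, hrw⟩ := schurShape_eq_sum_monomial N (diagramOf p)
  unfold schur
  rw [hrw]
  exact coeff_sum_monomial_nonneg S _ m

open Finset MvPolynomial in
lemma schur_coeff_pos_iff (N : ℕ) {n : ℕ} (p : n.Partition) (m : Fin N →₀ ℕ) :
    0 < coeff m (schur N p) ↔ ∃ T : (diagramOf p).cells → Fin N,
      IsSSYTof (diagramOf p) N T ∧ (∑ c : (diagramOf p).cells, Finsupp.single (T c) 1) = m := by
  obtain ⟨S, hS, hrw⟩ := schurShape_eq_sum_monomial N (diagramOf p)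
  unfold schur
  rw [hrw, coeff_sum_monomial_pos]
  constructor
  · rintro ⟨T, h1, h2⟩; exact ⟨T, (hS T).mp h1, h2⟩
  · rintro ⟨T, h1, h2⟩; exact ⟨T, (hS T).mpr h1, h2⟩

open Finset MvPolynomial in
lemma content_eq_iff {A : Type*} [Fintype A] {N n : ℕ} (f : A → Fin N)
    (q : n.Partition) :
    (∑ v : A, Finsupp.single (f v) 1) = contentP N q
      ↔ ∀ i : Fin N,
          ((Finset.univ : Finset A).filter (fun v => f v = i)).card = pseq q (i:ℕ) := by
  classical
  constructor
  · intro h i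
    rw [← content_apply f i, h, contentP_apply]
  · intro h
    ext i
    rw [content_apply, contentP_apply]
    exact h i


/-! #### Stable partitions and proper colorings -/

lemma multiset_map_eq_coe {α β : Type*} (f : α → β) :
    ∀ (l : List β) (s : Multiset α), s.map f = ↑l →
      ∃ L : List α, s = ↑L ∧ L.map f = l := by
  intro l
  induction l with
  | nil =>
      intro s h
      refine ⟨[], ?_, rfl⟩
      have : s = 0 := Multiset.map_eq_zero.mp h
      rw [this]; rfl
  | cons b l ih =>
      intro s h
      have hb : b ∈ s.map f := by rw [h]; exact Multiset.mem_coe.mpr (List.mem_cons_self)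
      obtain ⟨a, ha, hfa⟩ := Multiset.mem_map.mp hb
      obtain ⟨s', rfl⟩ := Multiset.exists_cons_of_mem ha
      rw [Multiset.map_cons, hfa, ← Multiset.cons_coe] at h
      have h' : s'.map f = ↑l := (Multiset.cons_inj_right b).mp h
      obtain ⟨L, rfl, hL⟩ := ih s' h'
      exact ⟨a :: L, by rw [Multiset.cons_coe], by rw [List.map_cons, hfa, hL]⟩

open Finset in
lemma exists_coloring_of_stablePartition {V : Type} [Fintype V] [DecidableEq V]
    {G : SimpleGraph V} {n : ℕ} {N : ℕ} (hN : n ≤ N)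
    (lam : n.Partition) (P : Finpartition (Finset.univ : Finset V))
    (hP : IsStablePartition G P) (hPtype : typeOf P = lam.parts) :
    ∃ κ : V → Fin N, (∀ u v : V, G.Adj u v → κ u ≠ κ v) ∧
      ∀ i : Fin N, ((Finset.univ : Finset V).filter (fun v => κ v = i)).card
        = pseq lam (i:ℕ) := by
  classical
  set l := lam.parts.sort (· ≥ ·) with hl
  have hml : P.parts.val.map Finset.card = ↑l := by
    rw [show ((l : List ℕ) : Multiset ℕ) = lam.parts from Multiset.sort_eq _ _]
    exact hPtype
  obtain ⟨L, hLval, hLmap⟩ := multiset_map_eq_coe Finset.card l P.parts.val hml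
  have hnodup : L.Nodup := by
    rw [← Multiset.coe_nodup, ← hLval]; exact P.parts.nodup
  have hlen : L.length = l.length := by rw [← hLmap, List.length_map]
  have hlenN : L.length ≤ N := by
    rw [hlen]
    exact le_trans (parts_length_le lam) hN
  have hmemL : ∀ b, b ∈ L ↔ b ∈ P.parts := by
    intro b
    rw [← Finset.mem_val, hLval, Multiset.mem_coe]
  have hexists : ∀ v : V, ∃ b ∈ L, v ∈ b := by
    intro v
    obtain ⟨b, hb, hvb⟩ := P.exists_mem (Finset.mem_univ v)
    exact ⟨b, (hmemL b).mpr hb, hvb⟩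
  have hidx : ∀ v : V, L.findIdx (fun b => decide (v ∈ b)) < L.length := by
    intro v
    apply List.findIdx_lt_length_of_exists
    obtain ⟨b, h1, h2⟩ := hexists v
    exact ⟨b, h1, by simpa using h2⟩
  set idx : V → ℕ := fun v => L.findIdx (fun b => decide (v ∈ b)) with hidxdef
  have hvmem : ∀ v : V, v ∈ L[idx v]'(hidx v) := by
    intro v
    have := List.findIdx_getElem (p := fun b => decide (v ∈ b)) (xs := L) (w := hidx v)
    simpa using this
  have hLmem : ∀ (j : ℕ) (hj : j < L.length), L[j] ∈ P.parts := by
    intro j hj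
    exact (hmemL _).mp (List.getElem_mem hj)
  have hidx_unique : ∀ (v : V) (j : ℕ) (hj : j < L.length), v ∈ L[j] → idx v = j := by
    intro v j hj hvj
    have heq : L[idx v]'(hidx v) = L[j] :=
      P.eq_of_mem_parts (hLmem _ (hidx v)) (hLmem j hj) (hvmem v) hvj
    have := List.nodup_iff_injective_get.mp hnodup
      (a₁ := ⟨idx v, hidx v⟩) (a₂ := ⟨j, hj⟩) (by simpa [List.get_eq_getElem] using heq)
    simpa using congrArg Fin.val this
  refine ⟨fun v => ⟨idx v, lt_of_lt_of_le (hidx v) hlenN⟩, ?_, ?_⟩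
  · intro u v hadj h
    rw [Fin.ext_iff] at h
    simp only at h
    have hv' : v ∈ L[idx u]'(hidx u) := by
      have := hvmem v
      have hgeq : L[idx u]'(hidx u) = L[idx v]'(hidx v) := by
        congr 1
      rw [hgeq]
      exact this
    exact hP _ (hLmem _ (hidx u)) u (hvmem u) v hv' hadj
  · intro i
    rcases lt_or_ge (i:ℕ) L.length with hiL | hiL
    · have hset : ((Finset.univ : Finset V).filter
          (fun v => (⟨idx v, lt_of_lt_of_le (hidx v) hlenN⟩ : Fin N) = i))
          = L[(i:ℕ)]'hiL := by
        ext v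
        simp only [Finset.mem_filter, Finset.mem_univ, true_and, Fin.ext_iff]
        constructor
        · intro h
          change idx v = (i:ℕ) at h
          have := hvmem v
          have hgeq : L[idx v]'(hidx v) = L[(i:ℕ)]'hiL := by
            congr 1
          rw [← hgeq]
          exact this
        · intro hv
          exact hidx_unique v (i:ℕ) hiL hv
      rw [hset]
      have h1 : pseq lam (i:ℕ) = l.getD (i:ℕ) 0 := rfl
      have h2 : (i:ℕ) < l.length := by rw [← hlen]; exact hiL
      rw [h1, List.getD_eq_getElem l 0 h2]
      have h3 : l[(i:ℕ)] = (List.map Finset.card L)[(i:ℕ)]'(by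
          rw [List.length_map]; exact hiL) :=
        List.getElem_of_eq hLmap.symm h2
      rw [h3, List.getElem_map]
    · have hset : ((Finset.univ : Finset V).filter
          (fun v => (⟨idx v, lt_of_lt_of_le (hidx v) hlenN⟩ : Fin N) = i)) = ∅ := by
        ext v
        simp only [Finset.mem_filter, Finset.mem_univ, true_and, Fin.ext_iff,
          Finset.notMem_empty, iff_false]
        intro h
        have h2 : idx v = (i:ℕ) := h
        have h3 : (i:ℕ) < L.length := h2 ▸ hidx v
        omega
      rw [hset]
      rw [pseq_zero lam (by rw [← hlen]; exact hiL)]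
      rfl

open Finset in
lemma exists_stablePartition_of_coloring {V : Type} [Fintype V] [DecidableEq V]
    {G : SimpleGraph V} {n N : ℕ} (hN : n ≤ N)
    (mu : n.Partition) (κ : V → Fin N)
    (hproper : ∀ u v : V, G.Adj u v → κ u ≠ κ v)
    (hcount : ∀ i : Fin N, ((Finset.univ : Finset V).filter (fun v => κ v = i)).card
      = pseq mu (i:ℕ)) :
    ∃ Q : Finpartition (Finset.univ : Finset V),
      IsStablePartition G Q ∧ typeOf Q = mu.parts := by
  classical
  set l := mu.parts.sort (· ≥ ·) with hl
  set k := l.length with hk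
  have hkN : k ≤ N := le_trans (parts_length_le mu) hN
  set F : Fin N → Finset V := fun i => Finset.univ.filter (fun v => κ v = i) with hF
  set s : Finset (Fin N) := Finset.univ.filter (fun i => (i:ℕ) < k) with hs
  have hFnonempty : ∀ i ∈ s, (F i).Nonempty := by
    intro i hi
    rw [hs, Finset.mem_filter] at hi
    rw [← Finset.card_pos]
    rw [show (F i).card = pseq mu (i:ℕ) from hcount i]
    exact pseq_pos mu hi.2
  have hκlt : ∀ v : V, ((κ v : ℕ)) < k := by
    intro v
    by_contra hcon
    have h0 : (F (κ v)).card = 0 := by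
      rw [show (F (κ v)).card = pseq mu (κ v : ℕ) from hcount (κ v)]
      exact pseq_zero mu (by rw [← hl]; omega)
    have : v ∈ F (κ v) := Finset.mem_filter.mpr ⟨Finset.mem_univ v, rfl⟩
    rw [Finset.card_eq_zero] at h0
    rw [h0] at this
    exact absurd this (Finset.notMem_empty v)
  have hinj : Set.InjOn F ↑s := by
    intro i hi j hj hij
    obtain ⟨v, hv⟩ := hFnonempty i (by exact hi)
    have hvj : v ∈ F j := hij ▸ hv
    rw [hF] at hv hvj
    rw [Finset.mem_filter] at hv hvj
    rw [← hv.2, ← hvj.2]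
  refine ⟨⟨s.image F, ?_, ?_, ?_⟩, ?_, ?_⟩
  · -- supIndep
    apply Finset.supIndep_iff_pairwiseDisjoint.mpr
    intro b1 h1 b2 h2 hne
    rw [Finset.coe_image] at h1 h2
    obtain ⟨i, hi, rfl⟩ := h1
    obtain ⟨j, hj, rfl⟩ := h2
    simp only [Function.onFun, id]
    rw [Finset.disjoint_left]
    intro v hv1 hv2
    rw [hF, Finset.mem_filter] at hv1 hv2
    exact hne (by rw [← hv1.2, ← hv2.2])
  · -- sup_parts
    apply le_antisymm
    · exact Finset.sup_le (fun b _ => Finset.subset_univ b)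
    · intro v _
      rw [Finset.mem_sup]
      refine ⟨F (κ v), ?_, Finset.mem_filter.mpr ⟨Finset.mem_univ v, rfl⟩⟩
      exact Finset.mem_image_of_mem F (Finset.mem_filter.mpr ⟨Finset.mem_univ _, hκlt v⟩)
  · -- not_bot_mem
    intro hbot
    rw [Finset.mem_image] at hbot
    obtain ⟨i, hi, hFi⟩ := hbot
    obtain ⟨v, hv⟩ := hFnonempty i hi
    rw [hFi] at hv
    exact absurd hv (Finset.notMem_empty v)
  · -- stable
    intro b hb
    simp only [Finset.mem_image] at hb
    obtain ⟨i, hi, rfl⟩ := hb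
    intro u hu v hv hadj
    rw [hF, Finset.mem_filter] at hu hv
    exact hproper u v hadj (hu.2.trans hv.2.symm)
  · -- type
    show (s.image F).val.map Finset.card = mu.parts
    rw [Finset.image_val_of_injOn hinj, Multiset.map_map]
    have hcongr : Multiset.map (Finset.card ∘ F) s.val
        = Multiset.map (pseq mu ∘ Fin.val) s.val :=
      Multiset.map_congr rfl (fun i _ => hcount i)
    rw [hcongr, ← Multiset.map_map (pseq mu) Fin.val]
    have hsmap : Finset.map ⟨Fin.val, Fin.val_injective⟩ s = Finset.range k := by
      ext x
      simp only [Finset.mem_map, Finset.mem_range, Function.Embedding.coeFn_mk]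
      constructor
      · rintro ⟨i, hi, rfl⟩
        rw [hs, Finset.mem_filter] at hi
        exact hi.2
      · intro hx
        exact ⟨⟨x, lt_of_lt_of_le hx hkN⟩, Finset.mem_filter.mpr ⟨Finset.mem_univ _, hx⟩, rfl⟩
    have hval : Multiset.map Fin.val s.val = (Finset.range k).val := by
      rw [← hsmap, Finset.map_val]
      rfl
    have hlist : (List.range k).map (pseq mu) = l := by
      apply List.ext_getElem
      · simp [hk]
      · intro i h1 h2
        simp only [List.getElem_map, List.getElem_range]
        show l.getD i 0 = l[i]
        exact List.getD_eq_getElem l 0 h2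
    rw [hval, Finset.range_val, ← Multiset.coe_range, Multiset.map_coe, hlist]
    exact Multiset.sort_eq _ _


/-- **Proposition (Stanley).** If a Schur positive graph `G` has a stable partition
of type `λ`, then it has a stable partition of type `μ` for every partition `μ` of
`|V(G)|` dominated by `λ`. -/
theorem stable_partition_of_dominated {V : Type} [Fintype V] [DecidableEq V]
    (G : SimpleGraph V) (hG : SchurPositive G)
    (lam mu : (Fintype.card V).Partition) (hdom : Dominates lam mu)
    (P : Finpartition (Finset.univ : Finset V))
    (hP : IsStablePartition G P) (hPtype : typeOf P = lam.parts) :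
    ∃ Q : Finpartition (Finset.univ : Finset V),
      IsStablePartition G Q ∧ typeOf Q = mu.parts := by
  classical
  obtain ⟨c, hc0, hexp⟩ := hG (Fintype.card V) le_rfl
  obtain ⟨κ, hκproper, hκcount⟩ :=
    exists_coloring_of_stablePartition (le_refl (Fintype.card V)) lam P hP hPtype
  have hcoeff : ∀ m : Fin (Fintype.card V) →₀ ℕ,
      MvPolynomial.coeff m (∑ ν : (Fintype.card V).Partition, c ν • schur (Fintype.card V) ν)
        = ∑ ν : (Fintype.card V).Partition, c ν * MvPolynomial.coeff m (schur (Fintype.card V) ν) := by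
    intro m
    rw [MvPolynomial.coeff_sum]
    exact Finset.sum_congr rfl
      (fun ν _ => by rw [MvPolynomial.coeff_smul, smul_eq_mul])
  have h1 : 0 < MvPolynomial.coeff (contentP (Fintype.card V) lam) (csf G (Fintype.card V)) := by
    rw [csf_coeff_pos_iff]
    exact ⟨κ, hκproper, (content_eq_iff κ lam).mpr hκcount⟩
  rw [hexp, hcoeff] at h1
  have hex : ∃ ν : (Fintype.card V).Partition,
      0 < c ν * MvPolynomial.coeff (contentP (Fintype.card V) lam) (schur (Fintype.card V) ν) := by
    by_contra hcon
    push_neg at hcon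
    have hle := Finset.sum_nonpos (s := (Finset.univ : Finset (Fintype.card V).Partition))
      (fun ν _ => hcon ν)
    omega
  obtain ⟨ν, hν⟩ := hex
  have hcν : 0 < c ν ∧ 0 < MvPolynomial.coeff (contentP (Fintype.card V) lam) (schur (Fintype.card V) ν) := by
    rcases mul_pos_iff.mp hν with ⟨h1', h2'⟩ | ⟨h1', h2'⟩
    · exact ⟨h1', h2'⟩
    · exact absurd h1' (not_lt.mpr (hc0 ν))
  obtain ⟨T, hT, hTcont⟩ := (schur_coeff_pos_iff (Fintype.card V) ν (contentP (Fintype.card V) lam)).mp hcν.2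
  have hνlam : Dominates ν lam :=
    dominates_of_ssyt le_rfl ν lam T hT ((content_eq_iff T lam).mp hTcont)
  have hνmu : Dominates ν mu := fun t => le_trans (hdom t) (hνlam t)
  obtain ⟨T', hT', hT'count⟩ := exists_ssyt_of_dominates le_rfl ν mu hνmu
  have hposT' : 0 < MvPolynomial.coeff (contentP (Fintype.card V) mu) (schur (Fintype.card V) ν) :=
    (schur_coeff_pos_iff (Fintype.card V) ν (contentP (Fintype.card V) mu)).mpr
      ⟨T', hT', (content_eq_iff T' mu).mpr hT'count⟩
  have h2 : 0 < MvPolynomial.coeff (contentP (Fintype.card V) mu) (csf G (Fintype.card V)) := by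
    rw [hexp, hcoeff]
    have hterm : 0 < c ν * MvPolynomial.coeff (contentP (Fintype.card V) mu) (schur (Fintype.card V) ν) :=
      mul_pos hcν.1 hposT'
    have hle : c ν * MvPolynomial.coeff (contentP (Fintype.card V) mu) (schur (Fintype.card V) ν)
        ≤ ∑ ν' : (Fintype.card V).Partition, c ν' * MvPolynomial.coeff (contentP (Fintype.card V) mu) (schur (Fintype.card V) ν') :=
      Finset.single_le_sum
        (f := fun ν' => c ν' * MvPolynomial.coeff (contentP (Fintype.card V) mu) (schur (Fintype.card V) ν'))
        (fun ν' _ => mul_nonneg (hc0 ν') (schur_coeff_nonneg (Fintype.card V) ν' _))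
        (Finset.mem_univ ν)
    omega
  obtain ⟨κ', hκ'proper, hκ'cont⟩ := (csf_coeff_pos_iff G (Fintype.card V) (contentP (Fintype.card V) mu)).mp h2
  exact exists_stablePartition_of_coloring le_rfl mu κ' hκ'proper
    ((content_eq_iff κ' mu).mp hκ'cont)
end

section
/- For all n ≥ 3 and d ≥ 3, the windmill graph W_n^d, obtained by joining d copies of the complete graph K_n at a single shared common vertex, is not Schur positive. -/
open Finset MvPolynomial

/-- The windmill graph `W_n^d`: a central vertex `none` together with `d` disjoint
blocks of `n − 1` vertices each; the centre together with each block induces a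
complete graph `K_n`, and there are no edges between distinct blocks. -/
def windmill (n d : ℕ) : SimpleGraph (Option (Fin d × Fin (n - 1))) :=
  SimpleGraph.fromRel fun a b =>
    a = none ∨ ∃ (i : Fin d) (u v : Fin (n - 1)), a = some (i, u) ∧ b = some (i, v)

lemma aux_prod_X_eq_monomial {ι σ : Type*} (s : Finset ι) (f : ι → σ) :
    (∏ i ∈ s, (X (f i) : MvPolynomial σ ℤ)) =
      monomial (∑ i ∈ s, Finsupp.single (f i) 1) 1 := by
  classical
  induction s using Finset.induction_on with
  | empty => simp [monomial_eq]
  | insert _ _ h ih =>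
      rw [Finset.prod_insert h, Finset.sum_insert h, ih, X, monomial_mul, one_mul]

lemma aux_coeff_prod_X {ι σ : Type*} [DecidableEq σ] [DecidableEq (σ →₀ ℕ)]
    (s : Finset ι) (f : ι → σ) (γ : σ →₀ ℕ) :
    coeff γ (∏ i ∈ s, (X (f i) : MvPolynomial σ ℤ)) =
      if (∑ i ∈ s, Finsupp.single (f i) 1) = γ then 1 else 0 := by
  rw [aux_prod_X_eq_monomial, coeff_monomial]
  congr 1

lemma aux_content_apply {ι σ : Type*} [DecidableEq σ] (s : Finset ι) (f : ι → σ) (j : σ) :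
    (∑ i ∈ s, Finsupp.single (f i) (1:ℕ)) j = ∑ i ∈ s, if f i = j then 1 else 0 := by
  rw [Finsupp.finset_sum_apply]
  exact Finset.sum_congr rfl fun i _ => Finsupp.single_apply

lemma aux_ite_nonneg_int {P : Prop} [Decidable P] : (0:ℤ) ≤ if P then 1 else 0 := by
  split_ifs <;> norm_num

section surgery
variable {N : ℕ} {D : YoungDiagram} {T : D.cells → Fin N} {u w : Fin N}

lemma cell_ext {a b : D.cells} (h1 : (a : ℕ × ℕ).1 = (b : ℕ × ℕ).1)
    (h2 : (a : ℕ × ℕ).2 = (b : ℕ × ℕ).2) : a = b :=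
  Subtype.ext (Prod.ext h1 h2)

lemma update_ssyt (hT : IsSSYTof D N T) (huw : (u : ℕ) + 1 = (w : ℕ))
    (hmax : ∀ c, T c ≤ w) (c₀ : D.cells) (hc₀ : T c₀ = u)
    (hrow : ∀ e : D.cells, (e : ℕ × ℕ).1 = (c₀ : ℕ × ℕ).1 → (c₀ : ℕ × ℕ).2 < (e : ℕ × ℕ).2 →
      T e ≠ u)
    (hcol : ∀ e : D.cells, (e : ℕ × ℕ).2 = (c₀ : ℕ × ℕ).2 → (c₀ : ℕ × ℕ).1 < (e : ℕ × ℕ).1 →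
      T e ≠ w) :
    IsSSYTof D N (Function.update T c₀ w) := by
  classical
  have huw' : u < w := by rw [Fin.lt_def]; omega
  have between : ∀ e : D.cells, u < T e → T e = w := fun e he => by
    have h2 := hmax e
    rw [Fin.lt_def] at he; rw [Fin.le_def] at h2
    exact Fin.ext (by omega)
  constructor
  · intro a b hr hc
    rw [Function.update_apply, Function.update_apply]
    by_cases hb : b = c₀
    · rw [if_pos hb]
      by_cases ha : a = c₀
      · rw [if_pos ha]
      · rw [if_neg ha]
        have : T a ≤ T c₀ := hT.1 a c₀ (hb ▸ hr) (hb ▸ hc)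
        rw [hc₀] at this
        exact le_of_lt (lt_of_le_of_lt this huw')
    · rw [if_neg hb]
      by_cases ha : a = c₀
      · rw [if_pos ha]
        have hr' : (b : ℕ × ℕ).1 = (c₀ : ℕ × ℕ).1 := by rw [← ha, hr]
        have hlt : (c₀ : ℕ × ℕ).2 < (b : ℕ × ℕ).2 := by
          rcases lt_or_eq_of_le (ha ▸ hc : (c₀ : ℕ × ℕ).2 ≤ (b : ℕ × ℕ).2) with h | h
          · exact h
          · exact absurd (cell_ext hr' h.symm) hb
        have h1 : u ≤ T b := by
          have := hT.1 c₀ b hr'.symm (le_of_lt hlt); rwa [hc₀] at this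
        have h2 : T b ≠ u := hrow b hr' hlt
        exact le_of_eq (between b (lt_of_le_of_ne h1 (Ne.symm h2))).symm
      · rw [if_neg ha]; exact hT.1 a b hr hc
  · intro a b hc hr
    rw [Function.update_apply, Function.update_apply]
    by_cases ha : a = c₀
    · rw [if_pos ha]
      have hb : ¬ b = c₀ := fun h => by rw [ha, h] at hr; omega
      rw [if_neg hb]
      have h1 : u < T b := by
        have := hT.2 c₀ b (by rw [← ha, ← hc]) (ha ▸ hr); rwa [hc₀] at this
      exact absurd (between b h1) (hcol b (by rw [← ha, hc]) (ha ▸ hr))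
    · rw [if_neg ha]
      by_cases hb : b = c₀
      · rw [if_pos hb]
        have := hT.2 a c₀ (hb ▸ hc) (hb ▸ hr)
        rw [hc₀] at this
        exact lt_trans this huw'
      · rw [if_neg hb]; exact hT.2 a b hc hr

lemma ssyt_surgery (hT : IsSSYTof D N T) (huw : (u : ℕ) + 1 = (w : ℕ))
    (hmax : ∀ c, T c ≤ w)
    (hu2 : 2 ≤ ∑ c : D.cells, if T c = u then 1 else 0)
    (hw1 : ∀ e e' : D.cells, T e = w → T e' = w → e = e') :
    ∃ c₀, T c₀ = u ∧ IsSSYTof D N (Function.update T c₀ w) := by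
  classical
  set S : Finset D.cells := Finset.univ.filter (fun c => T c = u) with hS
  have hScard : 2 ≤ S.card := by
    rw [hS, Finset.card_filter]; exact hu2
  have hmemS : ∀ c, c ∈ S ↔ T c = u := by intro c; simp [hS]
  have hcolinj : ∀ a ∈ S, ∀ b ∈ S, (a : ℕ × ℕ).2 = (b : ℕ × ℕ).2 → a = b := by
    intro a ha b hb hcol
    rcases lt_trichotomy (a : ℕ × ℕ).1 (b : ℕ × ℕ).1 with h | h | h
    · have := hT.2 a b hcol h
      rw [(hmemS a).1 ha, (hmemS b).1 hb] at this; exact absurd this (lt_irrefl u)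
    · exact cell_ext h hcol
    · have := hT.2 b a hcol.symm h
      rw [(hmemS a).1 ha, (hmemS b).1 hb] at this; exact absurd this (lt_irrefl u)
  have hSne : S.Nonempty := Finset.card_pos.mp (by omega)
  obtain ⟨c₀, hc₀S, hc₀max⟩ := S.exists_max_image (fun c => (c : ℕ × ℕ).2) hSne
  have hc₀u : T c₀ = u := (hmemS c₀).1 hc₀S
  have hrow₀ : ∀ e : D.cells, (e : ℕ × ℕ).1 = (c₀ : ℕ × ℕ).1 → (c₀ : ℕ × ℕ).2 < (e : ℕ × ℕ).2 →
      T e ≠ u := by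
    intro e _ hlt he
    have := hc₀max e ((hmemS e).2 he)
    omega
  by_cases hbad : ∀ e : D.cells, (e : ℕ × ℕ).2 = (c₀ : ℕ × ℕ).2 → (c₀ : ℕ × ℕ).1 < (e : ℕ × ℕ).1 →
      T e ≠ w
  · exact ⟨c₀, hc₀u, update_ssyt hT huw hmax c₀ hc₀u hrow₀ hbad⟩
  · push_neg at hbad
    obtain ⟨cw, hcwcol, hcwrow, hcww⟩ := hbad
    have hS'ne : (S.erase c₀).Nonempty := by
      rw [← Finset.card_pos, Finset.card_erase_of_mem hc₀S]; omega
    obtain ⟨c₁, hc₁S', hc₁max⟩ := (S.erase c₀).exists_max_image (fun c => (c : ℕ × ℕ).2) hS'ne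
    have hc₁S : c₁ ∈ S := Finset.mem_of_mem_erase hc₁S'
    have hc₁u : T c₁ = u := (hmemS c₁).1 hc₁S
    have hc₁ne : c₁ ≠ c₀ := Finset.ne_of_mem_erase hc₁S'
    have hc₁lt : (c₁ : ℕ × ℕ).2 < (c₀ : ℕ × ℕ).2 := by
      rcases lt_or_eq_of_le (hc₀max c₁ hc₁S) with h | h
      · exact h
      · exact absurd (hcolinj c₁ hc₁S c₀ hc₀S h) hc₁ne
    refine ⟨c₁, hc₁u, update_ssyt hT huw hmax c₁ hc₁u ?_ ?_⟩
    · intro e her helt he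
      have heS : e ∈ S := (hmemS e).2 he
      have he₀ : e = c₀ := by
        by_contra hne
        have := hc₁max e (Finset.mem_erase.mpr ⟨hne, heS⟩)
        omega
      rw [he₀] at her
      have hpD : ((cw : ℕ × ℕ).1, (c₁ : ℕ × ℕ).2) ∈ D := by
        refine D.up_left_mem (le_refl _) ?_ ((YoungDiagram.mem_cells _).1 cw.2)
        show (c₁ : ℕ × ℕ).2 ≤ (cw : ℕ × ℕ).2
        omega
      set p : D.cells := ⟨((cw : ℕ × ℕ).1, (c₁ : ℕ × ℕ).2), (YoungDiagram.mem_cells _).2 hpD⟩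
        with hp
      have hTp : u < T p := by
        rw [← hc₁u]
        exact hT.2 c₁ p rfl (by simp [hp]; omega)
      have hTpw : T p = w := by
        have h2 := hmax p
        rw [Fin.lt_def] at hTp; rw [Fin.le_def] at h2
        exact Fin.ext (by omega)
      have hpcw : p = cw := hw1 p cw hTpw hcww
      have : (c₁ : ℕ × ℕ).2 = (cw : ℕ × ℕ).2 := by
        have := congrArg (fun x : D.cells => (x : ℕ × ℕ).2) hpcw
        simpa [hp] using this
      omega
    · intro e hecol herow he
      have := hw1 e cw he hcww
      rw [this] at hecol
      omega
end surgery


lemma aux_coeff_csf {V : Type} [Fintype V] [DecidableEq V] (G : SimpleGraph V)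
    [DecidableRel G.Adj] (N : ℕ) (γ : Fin N →₀ ℕ)
    [DecidablePred (fun κ : V → Fin N => ∀ a b : V, G.Adj a b → κ a ≠ κ b)] :
    coeff γ (csf G N) =
      ∑ κ ∈ Finset.univ.filter
          (fun κ : V → Fin N => ∀ a b : V, G.Adj a b → κ a ≠ κ b),
        (if (∑ v : V, Finsupp.single (κ v) 1) = γ then (1:ℤ) else 0) := by
  classical
  unfold csf
  rw [coeff_sum]
  refine Finset.sum_congr ?_ fun κ _ => aux_coeff_prod_X _ _ _
  congr 1
  exact congrArg (fun i => @Finset.univ _ i) (Subsingleton.elim _ _)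

lemma aux_coeff_schurShape (N : ℕ) (D : YoungDiagram) (γ : Fin N →₀ ℕ)
    [DecidablePred (fun T : D.cells → Fin N => IsSSYTof D N T)] :
    coeff γ (schurShape N D) =
      ∑ T ∈ Finset.univ.filter (fun T : D.cells → Fin N => IsSSYTof D N T),
        (if (∑ c : D.cells, Finsupp.single (T c) 1) = γ then (1:ℤ) else 0) := by
  classical
  unfold schurShape
  rw [coeff_sum]
  refine Finset.sum_congr ?_ fun T _ => aux_coeff_prod_X _ _ _
  first
  | rfl
  | (congr 1 <;> exact congrArg (fun i => @Finset.univ _ i) (Subsingleton.elim _ _))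


/-- **Theorem.** For all `n ≥ 3` and `d ≥ 3`, the windmill graph `W_n^d` is not
Schur positive. -/
theorem windmill_not_schurPositive (n d : ℕ) (hn : 3 ≤ n) (hd : 3 ≤ d) :
    ¬ SchurPositive (windmill n d) := by
  classical
  intro hSP
  have hcard : Fintype.card (Option (Fin d × Fin (n - 1))) = d * (n - 1) + 1 := by
    simp
  have hn1N : n - 1 < Fintype.card (Option (Fin d × Fin (n - 1))) := by
    have h1 : 1 * (n - 1) ≤ d * (n - 1) := Nat.mul_le_mul_right _ (by omega)
    omega
  set N : ℕ := Fintype.card (Option (Fin d × Fin (n - 1))) with hN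
  obtain ⟨c, hc0, hceq⟩ := hSP N le_rfl
  have hle : n - 1 ≤ N := le_of_lt hn1N
  set u : Fin N := ⟨n - 2, by omega⟩ with hu
  set w : Fin N := ⟨n - 1, hn1N⟩ with hw
  have huw : (u : ℕ) + 1 = (w : ℕ) := by simp [hu, hw]; omega
  -- the two exponent vectors
  set β : Fin N →₀ ℕ := Finsupp.onFinset Finset.univ
    (fun j => if (j : ℕ) < n - 1 then d else if (j : ℕ) = n - 1 then 1 else 0)
    (fun _ _ => Finset.mem_univ _) with hβ
  set α : Fin N →₀ ℕ := Finsupp.onFinset Finset.univ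
    (fun j => if (j : ℕ) < n - 2 then d
      else if (j : ℕ) = n - 2 then d - 1 else if (j : ℕ) = n - 1 then 2 else 0)
    (fun _ _ => Finset.mem_univ _) with hα
  have hβval : ∀ j : Fin N,
      β j = if (j : ℕ) < n - 1 then d else if (j : ℕ) = n - 1 then 1 else 0 :=
    fun j => Finsupp.onFinset_apply
  have hαval : ∀ j : Fin N,
      α j = if (j : ℕ) < n - 2 then d
        else if (j : ℕ) = n - 2 then d - 1 else if (j : ℕ) = n - 1 then 2 else 0 :=
    fun j => Finsupp.onFinset_apply
  -- coefficient formula for csf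
  have hcoeffC : ∀ γ : Fin N →₀ ℕ,
      coeff γ (csf (windmill n d) N) =
        ∑ κ ∈ Finset.univ.filter
          (fun κ : Option (Fin d × Fin (n - 1)) → Fin N => ∀ a b : Option (Fin d × Fin (n - 1)), (windmill n d).Adj a b → κ a ≠ κ b),
          (if (∑ v : Option (Fin d × Fin (n - 1)), Finsupp.single (κ v) 1) = γ then (1:ℤ) else 0) := by
    intro γ
    exact aux_coeff_csf (windmill n d) N γ
  -- coefficient formula for schurShape
  have hcoeffS : ∀ (γ : Fin N →₀ ℕ) (D : YoungDiagram),
      coeff γ (schurShape N D) =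
        ∑ T ∈ Finset.univ.filter (fun T : D.cells → Fin N => IsSSYTof D N T),
          (if (∑ c : D.cells, Finsupp.single (T c) 1) = γ then (1:ℤ) else 0) := by
    intro γ D
    exact aux_coeff_schurShape N D γ
  -- the explicit proper colouring with content β
  set κ₀ : Option (Fin d × Fin (n - 1)) → Fin N := fun v => v.elim w (fun p => Fin.castLE hle p.2) with hκ₀
  have hκ₀proper : ∀ a b : Option (Fin d × Fin (n - 1)), (windmill n d).Adj a b → κ₀ a ≠ κ₀ b := by
    have key : ∀ a b : Option (Fin d × Fin (n - 1)),
        (a = none ∨ ∃ (i : Fin d) (x y : Fin (n-1)), a = some (i, x) ∧ b = some (i, y)) →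
        a ≠ b → κ₀ a ≠ κ₀ b := by
      rintro a b (rfl | ⟨i, x, y, rfl, rfl⟩) hne
      · match b with
        | none => exact absurd rfl hne
        | some p =>
            intro h
            have : (n - 1 : ℕ) = (p.2 : ℕ) := congrArg Fin.val h
            have := p.2.isLt
            omega
      · intro h
        have hxy : x = y := Fin.castLE_injective hle h
        exact hne (by rw [hxy])
    intro a b hadj
    rw [windmill, SimpleGraph.fromRel_adj] at hadj
    obtain ⟨hne, hrel | hrel⟩ := hadj
    · exact key a b hrel hne
    · exact fun h => key b a hrel (Ne.symm hne) h.symm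
  have hcontκ₀ : (∑ v : Option (Fin d × Fin (n - 1)), Finsupp.single (κ₀ v) 1) = β := by
    ext j
    rw [aux_content_apply]
    rw [Fintype.sum_option]
    rw [Fintype.sum_prod_type]
    have hnone : κ₀ none = w := rfl
    have hinner : ∀ a : Fin d,
        (∑ b : Fin (n-1), if κ₀ (some (a, b)) = j then 1 else 0) =
          if (j : ℕ) < n - 1 then 1 else 0 := by
      intro a
      by_cases hj : (j : ℕ) < n - 1
      · rw [if_pos hj]
        have : ∀ b : Fin (n-1), (κ₀ (some (a, b)) = j) ↔ b = ⟨(j : ℕ), hj⟩ := by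
          intro b
          constructor
          · intro h
            have : ((b : ℕ) : ℕ) = (j : ℕ) := congrArg Fin.val h
            exact Fin.ext (by simpa using this)
          · intro h
            subst h
            exact Fin.ext (by simp [hκ₀])
        calc (∑ b : Fin (n-1), if κ₀ (some (a, b)) = j then 1 else 0)
            = ∑ b : Fin (n-1), if b = ⟨(j : ℕ), hj⟩ then 1 else 0 :=
              Finset.sum_congr rfl fun b _ => by rw [if_congr (this b) rfl rfl]
          _ = 1 := by rw [Finset.sum_ite_eq' Finset.univ]; simp
      · rw [if_neg hj]
        refine Finset.sum_eq_zero fun b _ => ?_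
        rw [if_neg]
        intro h
        have : ((b : ℕ) : ℕ) = (j : ℕ) := congrArg Fin.val h
        have := b.isLt
        omega
    rw [Finset.sum_congr rfl fun a _ => hinner a]
    rw [Finset.sum_const, Finset.card_univ, Fintype.card_fin]
    rw [hβval j]
    have hwj : (κ₀ none = j) ↔ ((j : ℕ) = n - 1) := by
      rw [hnone]
      constructor
      · intro h; exact (congrArg Fin.val h).symm
      · intro h; exact Fin.ext (by simp [hw, h])
    by_cases hj : (j : ℕ) < n - 1
    · rw [if_pos hj, if_pos hj, if_neg (by rw [hwj]; omega)]
      simp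
    · by_cases hj2 : (j : ℕ) = n - 1
      · rw [if_neg hj, if_pos (hwj.mpr hj2), if_neg hj, if_pos hj2]
        simp
      · rw [if_neg hj, if_neg (by rw [hwj]; exact hj2), if_neg hj, if_neg hj2]
        simp
  -- coeff β csf > 0
  have hβpos : 0 < coeff β (csf (windmill n d) N) := by
    rw [hcoeffC]
    refine Finset.sum_pos' (fun κ _ => aux_ite_nonneg_int) ⟨κ₀, ?_, ?_⟩
    · rw [Finset.mem_filter]; exact ⟨Finset.mem_univ _, hκ₀proper⟩
    · rw [if_pos hcontκ₀]; norm_num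
  -- coeff α csf = 0
  have hαzero : coeff α (csf (windmill n d) N) = 0 := by
    rw [hcoeffC]
    refine Finset.sum_eq_zero fun κ hκ => ?_
    rw [Finset.mem_filter] at hκ
    rw [if_neg]
    intro hcont
    have hcount : (∑ v : Option (Fin d × Fin (n - 1)), if κ v = κ none then 1 else 0) = α (κ none) := by
      rw [← aux_content_apply, hcont]
    have h2 : 2 ≤ ∑ v : Option (Fin d × Fin (n - 1)), if κ v = κ none then 1 else 0 := by
      have h1 : 1 ≤ ∑ v : Option (Fin d × Fin (n - 1)), if κ v = κ none then 1 else 0 := by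
        refine Finset.single_le_sum (f := fun v : Option (Fin d × Fin (n - 1)) => if κ v = κ none then 1 else 0)
          (fun i _ => Nat.zero_le _) (Finset.mem_univ none) |>.trans_eq' ?_
        rw [if_pos rfl]
      rw [hcount] at h1 ⊢
      rw [hαval] at h1 ⊢
      split_ifs at h1 ⊢ <;> omega
    -- extract a second vertex with the same colour as the centre
    have : 1 < (Finset.univ.filter (fun v : Option (Fin d × Fin (n - 1)) => κ v = κ none)).card := by
      rw [Finset.card_filter]; exact h2
    obtain ⟨x, hx, y, hy, hxy⟩ := Finset.one_lt_card.mp this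
    rw [Finset.mem_filter] at hx hy
    have hvx : ∃ p, (some p : Option (Fin d × Fin (n - 1))) ≠ none ∧ κ (some p) = κ none := by
      match x, hx, y, hy with
      | none, hx, none, hy => exact absurd rfl hxy
      | some p, hx, _, _ => exact ⟨p, by simp, hx.2⟩
      | none, hx, some p, hy => exact ⟨p, by simp, hy.2⟩
    obtain ⟨p, hpne, hpcol⟩ := hvx
    have hadj : (windmill n d).Adj none (some p) := by
      rw [windmill, SimpleGraph.fromRel_adj]
      exact ⟨by simp, Or.inl (Or.inl rfl)⟩
    exact hκ.2 none (some p) hadj hpcol.symm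
  -- pushing coeff through the Schur expansion
  have hexp : ∀ γ : Fin N →₀ ℕ,
      coeff γ (csf (windmill n d) N) = ∑ μ, c μ * coeff γ (schur N μ) := by
    intro γ
    rw [hceq, coeff_sum]
    exact Finset.sum_congr rfl fun μ _ => by rw [coeff_smul, smul_eq_mul]
  -- Schur coefficients are nonnegative
  have hSnn : ∀ (γ : Fin N →₀ ℕ) (μ : N.Partition), 0 ≤ coeff γ (schur N μ) := by
    intro γ μ
    rw [schur, hcoeffS]
    exact Finset.sum_nonneg fun T _ => aux_ite_nonneg_int
  -- find μ₀ with c μ₀ > 0 and a SSYT of shape μ₀ and content β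
  have hsum : 0 < ∑ μ, c μ * coeff β (schur N μ) := by rw [← hexp]; exact hβpos
  obtain ⟨μ₀, _, hμ₀⟩ := Finset.exists_ne_zero_of_sum_ne_zero (ne_of_gt hsum)
  have hcμ₀ : 0 < c μ₀ := lt_of_le_of_ne (hc0 μ₀) (fun h => hμ₀ (by rw [← h]; ring))
  have hsβ : coeff β (schur N μ₀) ≠ 0 := fun h => hμ₀ (by rw [h, mul_zero])
  rw [schur, hcoeffS] at hsβ
  obtain ⟨T, hT, hTne⟩ := Finset.exists_ne_zero_of_sum_ne_zero hsβ
  rw [Finset.mem_filter] at hT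
  have hTssyt : IsSSYTof (diagramOf μ₀) N T := hT.2
  have hTβ : (∑ c : (diagramOf μ₀).cells, Finsupp.single (T c) 1) = β := by
    by_contra h
    rw [if_neg h] at hTne
    exact hTne rfl
  clear hsβ hTne hμ₀
  -- counts of values of T
  have hTcount : ∀ j : Fin N,
      (∑ c : (diagramOf μ₀).cells, if T c = j then 1 else 0) = β j := by
    intro j; rw [← aux_content_apply, hTβ]
  -- surgery hypotheses
  have hn2n1 : (n : ℕ) - 2 < n - 1 := by omega
  have hβu : β u = d := by
    rw [hβval]
    rw [if_pos (show (u : ℕ) < n - 1 by simp [hu]; omega)]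
  have hβw : β w = 1 := by
    rw [hβval]
    rw [if_neg (show ¬ (w : ℕ) < n - 1 by simp [hw]),
      if_pos (show (w : ℕ) = n - 1 by simp [hw])]
  have hmax : ∀ e, T e ≤ w := by
    intro e
    by_contra hgt
    push_neg at hgt
    have hval : (n : ℕ) - 1 < ((T e) : ℕ) := by
      rw [Fin.lt_def] at hgt; simpa [hw] using hgt
    have h0 : β (T e) = 0 := by
      rw [hβval]
      rw [if_neg (show ¬ ((T e : Fin N) : ℕ) < n - 1 by omega),
        if_neg (show ¬ ((T e : Fin N) : ℕ) = n - 1 by omega)]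
    have h1 : 1 ≤ ∑ c : (diagramOf μ₀).cells, if T c = T e then 1 else 0 := by
      refine Finset.single_le_sum (f := fun c => if T c = T e then 1 else 0)
        (fun i _ => Nat.zero_le _) (Finset.mem_univ e) |>.trans_eq' ?_
      rw [if_pos rfl]
    rw [hTcount, h0] at h1
    omega
  have hu2 : 2 ≤ ∑ c : (diagramOf μ₀).cells, if T c = u then 1 else 0 := by
    rw [hTcount, hβu]; omega
  have hw1 : ∀ e e' : (diagramOf μ₀).cells, T e = w → T e' = w → e = e' := by
    intro e e' he he'
    by_contra hne
    have h2 : 2 ≤ ∑ c : (diagramOf μ₀).cells, if T c = w then 1 else 0 := by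
      calc (2:ℕ) = ∑ c ∈ ({e, e'} : Finset (diagramOf μ₀).cells),
            (if T c = w then (1:ℕ) else 0) := by
              rw [Finset.sum_pair hne, if_pos he, if_pos he']
        _ ≤ ∑ c : (diagramOf μ₀).cells, if T c = w then 1 else 0 :=
              Finset.sum_le_sum_of_subset (Finset.subset_univ _)
    rw [hTcount, hβw] at h2
    omega
  obtain ⟨c₀, hc₀u, hc₀ssyt⟩ := ssyt_surgery hTssyt huw hmax hu2 hw1
  -- the updated tableau has content α
  have hT'count : ∀ j : Fin N,
      (∑ c : (diagramOf μ₀).cells, if Function.update T c₀ w c = j then 1 else 0) = α j := by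
    intro j
    have hsplit1 : (if u = j then (1:ℕ) else 0) +
        (∑ c ∈ Finset.univ.erase c₀, if T c = j then 1 else 0) = β j := by
      rw [← hTcount j, ← hc₀u]
      exact Finset.add_sum_erase Finset.univ (fun c => if T c = j then (1:ℕ) else 0)
        (Finset.mem_univ c₀)
    have hsplit2 : (if w = j then (1:ℕ) else 0) +
        (∑ c ∈ Finset.univ.erase c₀, if T c = j then 1 else 0) =
        ∑ c : (diagramOf μ₀).cells, if Function.update T c₀ w c = j then 1 else 0 := by
      have h4 := Finset.add_sum_erase Finset.univ
        (fun c => if Function.update T c₀ w c = j then (1:ℕ) else 0) (Finset.mem_univ c₀)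
      simp only [Function.update_self] at h4
      rw [← h4]
      congr 1
      exact Finset.sum_congr rfl fun c hc => by
        rw [Function.update_of_ne (Finset.mem_erase.mp hc).1]
    have hkey : (if u = j then (1:ℕ) else 0) + α j = (if w = j then 1 else 0) + β j := by
      rw [hαval, hβval]
      have hun : (u = j) ↔ ((j : ℕ) = n - 2) := by
        constructor
        · intro h; exact (congrArg Fin.val h).symm
        · intro h; exact Fin.ext (by simp [hu, h])
      have hwn : (w = j) ↔ ((j : ℕ) = n - 1) := by
        constructor
        · intro h; exact (congrArg Fin.val h).symm
        · intro h; exact Fin.ext (by simp [hw, h])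
      simp only [hun, hwn]
      split_ifs <;> omega
    omega
  have hT'α : (∑ c : (diagramOf μ₀).cells, Finsupp.single (Function.update T c₀ w c) 1) = α := by
    ext j
    rw [aux_content_apply]
    exact hT'count j
  -- coeff α (schur N μ₀) > 0
  have hsα : 0 < coeff α (schur N μ₀) := by
    rw [schur, hcoeffS]
    refine Finset.sum_pos' (fun T _ => aux_ite_nonneg_int) ⟨Function.update T c₀ w, ?_, ?_⟩
    · rw [Finset.mem_filter]; exact ⟨Finset.mem_univ _, hc₀ssyt⟩
    · rw [if_pos hT'α]; norm_num
  -- contradiction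
  have hfinal : 0 < ∑ μ, c μ * coeff α (schur N μ) := by
    refine Finset.sum_pos' (fun μ _ => mul_nonneg (hc0 μ) (hSnn α μ)) ⟨μ₀, Finset.mem_univ _, ?_⟩
    exact mul_pos hcμ₀ hsα
  rw [← hexp] at hfinal
  rw [hαzero] at hfinal
  exact lt_irrefl 0 hfinal
end

section
/- Let m ≥ 1 and n ≥ 2. The fan graph F_{m,n} has exactly one stable partition into three blocks, and the block sizes of this unique stable tripartition are m, ⌈n/2⌉ and ⌊n/2⌋. -/
open Finset MvPolynomial

/-- The fan graph `F_{m,n}`: the join of the edgeless graph on `m` vertices with the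
path `P_n`; every one of the `m` independent vertices is adjacent to every vertex of
the path. -/
def fan (m n : ℕ) : SimpleGraph (Fin m ⊕ Fin n) :=
  SimpleGraph.fromRel fun a b =>
    (∃ (i : Fin m) (u : Fin n), a = Sum.inl i ∧ b = Sum.inr u) ∨
    (∃ u v : Fin n, a = Sum.inr u ∧ b = Sum.inr v ∧ u.val + 1 = v.val)

namespace FanAux

open Finset

/-- The canonical 3-coloring of the fan graph. -/
def col (m n : ℕ) : Fin m ⊕ Fin n → Fin 3
  | .inl _ => 0
  | .inr u => if u.val % 2 = 0 then 1 else 2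

/-- The color classes. -/
def blk (m n : ℕ) (c : Fin 3) : Finset (Fin m ⊕ Fin n) :=
  univ.filter (fun x => col m n x = c)

lemma mem_blk {m n : ℕ} {c : Fin 3} {x : Fin m ⊕ Fin n} :
    x ∈ blk m n c ↔ col m n x = c := by simp [blk]

lemma adj_lr (m n : ℕ) (i : Fin m) (u : Fin n) :
    (fan m n).Adj (Sum.inl i) (Sum.inr u) := by
  refine ⟨by simp, Or.inl (Or.inl ⟨i, u, rfl, rfl⟩)⟩

lemma adj_path (m n : ℕ) (u v : Fin n) (h : u.val + 1 = v.val) :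
    (fan m n).Adj (Sum.inr u) (Sum.inr v) := by
  refine ⟨by simp [Fin.ext_iff]; omega, Or.inl (Or.inr ⟨u, v, rfl, rfl, h⟩)⟩

lemma not_adj_ll (m n : ℕ) (i j : Fin m) :
    ¬ (fan m n).Adj (Sum.inl i) (Sum.inl j) := by
  simp [fan, SimpleGraph.fromRel_adj]

lemma adj_rr {m n : ℕ} {u v : Fin n}
    (h : (fan m n).Adj (Sum.inr u) (Sum.inr v)) :
    u.val + 1 = v.val ∨ v.val + 1 = u.val := by
  rcases h with ⟨hne, h | h⟩ <;>
    rcases h with ⟨i, w, hh, _⟩ | ⟨a, b, ha, hb, hab⟩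
  · exact absurd hh (by simp)
  · cases Sum.inr_injective ha; cases Sum.inr_injective hb; exact Or.inl hab
  · exact absurd hh (by simp)
  · cases Sum.inr_injective ha; cases Sum.inr_injective hb; exact Or.inr hab

lemma card_even_range (n : ℕ) :
    ((range n).filter (fun k => k % 2 = 0)).card = (n + 1) / 2 := by
  induction n with
  | zero => simp
  | succ n ih =>
    rw [range_add_one, filter_insert]
    by_cases h : n % 2 = 0
    · rw [if_pos h, card_insert_of_notMem (by simp), ih]; omega
    · rw [if_neg h, ih]; omega

lemma card_odd_range (n : ℕ) :
    ((range n).filter (fun k => k % 2 = 1)).card = n / 2 := by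
  induction n with
  | zero => simp
  | succ n ih =>
    rw [range_add_one, filter_insert]
    by_cases h : n % 2 = 1
    · rw [if_pos h, card_insert_of_notMem (by simp), ih]; omega
    · rw [if_neg h, ih]; omega

lemma card_filter_fin (n : ℕ) (p : ℕ → Prop) [DecidablePred p] :
    ((univ : Finset (Fin n)).filter (fun u => p u.val)).card
      = ((range n).filter p).card := by
  rw [Finset.card_filter, Finset.card_filter,
    Fin.sum_univ_eq_sum_range (fun k => if p k then 1 else 0)]

lemma blk0_eq (m n : ℕ) :
    blk m n 0 = (univ : Finset (Fin m)).map ⟨Sum.inl, Sum.inl_injective⟩ := by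
  ext x
  cases x with
  | inl i => simp [mem_blk, col]
  | inr u =>
    simp only [mem_blk, col, mem_map, Function.Embedding.coeFn_mk]
    constructor
    · intro h; split at h <;> simp_all
    · rintro ⟨a, -, h⟩; exact absurd h (by simp)

lemma blk1_eq (m n : ℕ) :
    blk m n 1 = ((univ : Finset (Fin n)).filter (fun u => u.val % 2 = 0)).map
      ⟨Sum.inr, Sum.inr_injective⟩ := by
  ext x
  cases x with
  | inl i =>
    simp only [mem_blk, col, mem_map, mem_filter, Function.Embedding.coeFn_mk]
    constructor
    · intro h; exact absurd h (by simp)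
    · rintro ⟨a, -, h⟩; exact absurd h (by simp)
  | inr u =>
    simp only [mem_blk, col, mem_map, mem_filter, Function.Embedding.coeFn_mk]
    constructor
    · intro h
      split at h
      · exact ⟨u, ⟨mem_univ _, by assumption⟩, rfl⟩
      · exact absurd h (by decide)
    · rintro ⟨a, ⟨-, ha⟩, h⟩
      cases Sum.inr_injective h
      simp [ha]

lemma blk2_eq (m n : ℕ) :
    blk m n 2 = ((univ : Finset (Fin n)).filter (fun u => u.val % 2 = 1)).map
      ⟨Sum.inr, Sum.inr_injective⟩ := by
  ext x
  cases x with
  | inl i =>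
    simp only [mem_blk, col, mem_map, mem_filter, Function.Embedding.coeFn_mk]
    constructor
    · intro h; exact absurd h (by simp)
    · rintro ⟨a, -, h⟩; exact absurd h (by simp)
  | inr u =>
    simp only [mem_blk, col, mem_map, mem_filter, Function.Embedding.coeFn_mk]
    constructor
    · intro h
      split at h
      · exact absurd h (by decide)
      · exact ⟨u, ⟨mem_univ _, by omega⟩, rfl⟩
    · rintro ⟨a, ⟨-, ha⟩, h⟩
      cases Sum.inr_injective h
      rw [if_neg (by omega)]

lemma card_blk0 (m n : ℕ) : (blk m n 0).card = m := by
  rw [blk0_eq, card_map, card_univ, Fintype.card_fin]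

lemma card_blk1 (m n : ℕ) : (blk m n 1).card = (n + 1) / 2 := by
  rw [blk1_eq, card_map, card_filter_fin n (fun k => k % 2 = 0), card_even_range]

lemma card_blk2 (m n : ℕ) : (blk m n 2).card = n / 2 := by
  rw [blk2_eq, card_map, card_filter_fin n (fun k => k % 2 = 1), card_odd_range]

lemma blk_disjoint {m n : ℕ} {c d : Fin 3} (h : c ≠ d) :
    Disjoint (blk m n c) (blk m n d) := by
  rw [Finset.disjoint_left]
  intro x hx hx'
  rw [mem_blk] at hx hx'
  exact h (hx ▸ hx' ▸ rfl)

/-- The standard parts of the unique stable tripartition. -/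
def stdParts (m n : ℕ) : Finset (Finset (Fin m ⊕ Fin n)) :=
  {blk m n 0, blk m n 1, blk m n 2}

variable {m n : ℕ}

lemma mem_blk0 (m n : ℕ) (hm : 1 ≤ m) : (Sum.inl ⟨0, hm⟩ : Fin m ⊕ Fin n) ∈ blk m n 0 := by
  rw [mem_blk]; rfl

lemma mem_blk1 (m n : ℕ) (hn : 2 ≤ n) : (Sum.inr ⟨0, by omega⟩ : Fin m ⊕ Fin n) ∈ blk m n 1 := by
  rw [mem_blk]; rfl

lemma mem_blk2 (m n : ℕ) (hn : 2 ≤ n) : (Sum.inr ⟨1, hn⟩ : Fin m ⊕ Fin n) ∈ blk m n 2 := by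
  rw [mem_blk]; rfl

lemma blk01 (m n : ℕ) (hm : 1 ≤ m) : blk m n 0 ≠ blk m n 1 := by
  intro h
  have := mem_blk0 m n hm
  rw [h, mem_blk] at this
  simp [col] at this

lemma blk02 (m n : ℕ) (hm : 1 ≤ m) : blk m n 0 ≠ blk m n 2 := by
  intro h
  have := mem_blk0 m n hm
  rw [h, mem_blk] at this
  simp [col] at this

lemma blk12 (m n : ℕ) (hn : 2 ≤ n) : blk m n 1 ≠ blk m n 2 := by
  intro h
  have := mem_blk1 m n hn
  rw [h, mem_blk] at this
  simp [col] at this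

/-- The standard stable tripartition of the fan graph. -/
def stdPartition (m n : ℕ) (hm : 1 ≤ m) (hn : 2 ≤ n) : Finpartition (univ : Finset (Fin m ⊕ Fin n)) where
  parts := stdParts m n
  supIndep := by
    rw [Finset.supIndep_iff_pairwiseDisjoint]
    intro a ha b hb hab
    simp only [stdParts, coe_insert, coe_singleton, Set.mem_insert_iff,
      Set.mem_singleton_iff] at ha hb
    rcases ha with rfl | rfl | rfl <;> rcases hb with rfl | rfl | rfl <;>
      first
        | exact absurd rfl hab
        | exact blk_disjoint (by decide)
  sup_parts := by
    ext x
    simp only [stdParts, mem_univ, iff_true, Finset.mem_sup, id_eq]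
    have h3 : ∀ c : Fin 3, c = 0 ∨ c = 1 ∨ c = 2 := by decide
    rcases h3 (col m n x) with h | h | h
    · exact ⟨blk m n 0, by simp, mem_blk.2 h⟩
    · exact ⟨blk m n 1, by simp, mem_blk.2 h⟩
    · exact ⟨blk m n 2, by simp, mem_blk.2 h⟩
  bot_notMem := by
    intro h
    simp only [stdParts, Finset.bot_eq_empty, mem_insert, mem_singleton] at h
    rcases h with h | h | h
    · exact absurd (h ▸ mem_blk0 m n hm) (by simp)
    · exact absurd (h ▸ mem_blk1 m n hn) (by simp)
    · exact absurd (h ▸ mem_blk2 m n hn) (by simp)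

lemma parts_eq (m n : ℕ) (hm : 1 ≤ m) (hn : 2 ≤ n)
    (P : Finpartition (univ : Finset (Fin m ⊕ Fin n)))
    (hP : IsStablePartition (fan m n) P) (h3 : P.parts.card = 3) :
    P.parts = stdParts m n := by
  have hstab : ∀ x y, (fan m n).Adj x y → P.part x ≠ P.part y := by
    intro x y hxy he
    have hx := P.mem_part (mem_univ x)
    have hy := P.mem_part (mem_univ y)
    rw [he] at hx
    exact hP _ (P.part_mem.2 (mem_univ y)) x hx y hy hxy
  set i0 : Fin m := ⟨0, hm⟩ with hi0
  set u0 : Fin n := ⟨0, by omega⟩ with hu0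
  set u1 : Fin n := ⟨1, hn⟩ with hu1
  set bL := P.part (Sum.inl i0) with hbL
  set b0 := P.part (Sum.inr u0) with hb0
  set b1 := P.part (Sum.inr u1) with hb1
  have hL0 : bL ≠ b0 := hstab _ _ (adj_lr m n i0 u0)
  have hL1 : bL ≠ b1 := hstab _ _ (adj_lr m n i0 u1)
  have h01 : b0 ≠ b1 := hstab _ _ (adj_path m n u0 u1 rfl)
  have hsub : ({bL, b0, b1} : Finset _) ⊆ P.parts := by
    intro b hb
    simp only [mem_insert, mem_singleton] at hb
    rcases hb with rfl | rfl | rfl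
    · exact P.part_mem.2 (mem_univ _)
    · exact P.part_mem.2 (mem_univ _)
    · exact P.part_mem.2 (mem_univ _)
  have hcard : ({bL, b0, b1} : Finset _).card = 3 := by
    rw [card_insert_of_notMem (by simp [hL0, hL1]),
      card_insert_of_notMem (by simp [h01]), card_singleton]
  have hparts : P.parts = {bL, b0, b1} :=
    (Finset.eq_of_subset_of_card_le hsub (by omega)).symm
  have hmem3 : ∀ x, P.part x = bL ∨ P.part x = b0 ∨ P.part x = b1 := by
    intro x
    have h := P.part_mem.2 (mem_univ x)
    rw [hparts] at h
    simpa using h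
  have hLeft : ∀ i : Fin m, P.part (Sum.inl i) = bL := by
    intro i
    rcases hmem3 (Sum.inl i) with h | h | h
    · exact h
    · exact absurd h (hstab _ _ (adj_lr m n i u0))
    · exact absurd h (hstab _ _ (adj_lr m n i u1))
  have hRight : ∀ k (hk : k < n),
      P.part (Sum.inr ⟨k, hk⟩) = if k % 2 = 0 then b0 else b1 := by
    intro k
    induction k with
    | zero =>
      intro hk
      rw [if_pos rfl, hb0]
    | succ k ih =>
      intro hk
      have hk' : k < n := by omega
      have hne := hstab _ _ (adj_path m n ⟨k, hk'⟩ ⟨k + 1, hk⟩ rfl)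
      rw [ih hk'] at hne
      have hneL : bL ≠ P.part (Sum.inr ⟨k + 1, hk⟩) :=
        hstab _ _ (adj_lr m n i0 ⟨k + 1, hk⟩)
      rcases hmem3 (Sum.inr ⟨k + 1, hk⟩) with h | h | h
      · exact absurd h.symm hneL
      · rcases Nat.mod_two_eq_zero_or_one k with hp | hp
        · rw [hp, if_pos rfl] at hne
          exact absurd h.symm hne
        · rw [if_pos (by omega)]
          exact h
      · rcases Nat.mod_two_eq_zero_or_one k with hp | hp
        · rw [if_neg (by omega)]
          exact h
        · rw [hp, if_neg (by omega)] at hne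
          exact absurd h.symm hne
  have hpartx : ∀ x : Fin m ⊕ Fin n, x ∈ P.part x := fun x => P.mem_part (mem_univ x)
  have hpart_eq : ∀ (x : Fin m ⊕ Fin n) (b), b ∈ ({bL, b0, b1} : Finset _) →
      x ∈ b → P.part x = b := by
    intro x b hb hx
    exact P.eq_of_mem_parts (P.part_mem.2 (mem_univ x)) (hsub hb) (hpartx x) hx
  have hRight' : ∀ u : Fin n, P.part (Sum.inr u) = if u.val % 2 = 0 then b0 else b1 := by
    intro u
    have := hRight u.val u.isLt
    simpa using this
  have hbL_eq : bL = blk m n 0 := by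
    ext x
    rw [mem_blk]
    constructor
    · intro hx
      have hpx : P.part x = bL := hpart_eq x bL (by simp) hx
      cases x with
      | inl i => rfl
      | inr u =>
        rw [hRight' u] at hpx
        split at hpx
        · exact absurd hpx.symm hL0
        · exact absurd hpx.symm hL1
    · intro hx
      cases x with
      | inl i => rw [← hLeft i]; exact hpartx _
      | inr u =>
        exfalso
        simp only [col] at hx
        split at hx <;> exact absurd hx (by decide)
  have hb0_eq : b0 = blk m n 1 := by
    ext x
    rw [mem_blk]
    constructor
    · intro hx
      have hpx : P.part x = b0 := hpart_eq x b0 (by simp) hx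
      cases x with
      | inl i =>
        rw [hLeft i] at hpx
        exact absurd hpx hL0
      | inr u =>
        rw [hRight' u] at hpx
        split at hpx
        · simp only [col]
          rw [if_pos (by assumption)]
        · exact absurd hpx.symm h01
    · intro hx
      cases x with
      | inl i => exact absurd hx (by simp [col])
      | inr u =>
        simp only [col] at hx
        have hu : u.val % 2 = 0 := by
          by_contra hu
          rw [if_neg hu] at hx
          exact absurd hx (by decide)
        have := hRight' u
        rw [if_pos hu] at this
        rw [← this]
        exact hpartx _
  have hb1_eq : b1 = blk m n 2 := by
    ext x
    rw [mem_blk]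
    constructor
    · intro hx
      have hpx : P.part x = b1 := hpart_eq x b1 (by simp) hx
      cases x with
      | inl i =>
        rw [hLeft i] at hpx
        exact absurd hpx hL1
      | inr u =>
        rw [hRight' u] at hpx
        split at hpx
        · exact absurd hpx h01
        · simp only [col]
          rw [if_neg (by assumption)]
    · intro hx
      cases x with
      | inl i => exact absurd hx (by simp [col])
      | inr u =>
        simp only [col] at hx
        have hu : ¬ u.val % 2 = 0 := by
          by_contra hu
          rw [if_pos hu] at hx
          exact absurd hx (by decide)
        have := hRight' u
        rw [if_neg hu] at this
        rw [← this]
        exact hpartx _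
  rw [hparts, hbL_eq, hb0_eq, hb1_eq]
  rfl

lemma stdParts_val (m n : ℕ) (hm : 1 ≤ m) (hn : 2 ≤ n) :
    (stdParts m n).val = {blk m n 0, blk m n 1, blk m n 2} := by
  have h1 : blk m n 1 ∉ ({blk m n 2} : Finset _) := by
    simp [blk12 m n hn]
  have h0 : blk m n 0 ∉ ({blk m n 1, blk m n 2} : Finset _) := by
    simp [blk01 m n hm, blk02 m n hm]
  show (insert (blk m n 0) (insert (blk m n 1) ({blk m n 2} : Finset _))).val = _
  rw [Finset.insert_val_of_notMem h0, Finset.insert_val_of_notMem h1]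
  rfl

lemma card_stdParts (m n : ℕ) (hm : 1 ≤ m) (hn : 2 ≤ n) :
    (stdParts m n).card = 3 := by
  have h1 : blk m n 1 ∉ ({blk m n 2} : Finset _) := by
    simp [blk12 m n hn]
  have h0 : blk m n 0 ∉ ({blk m n 1, blk m n 2} : Finset _) := by
    simp [blk01 m n hm, blk02 m n hm]
  rw [stdParts, card_insert_of_notMem h0, card_insert_of_notMem h1, card_singleton]

lemma stable_stdPartition (m n : ℕ) (hm : 1 ≤ m) (hn : 2 ≤ n) :
    IsStablePartition (fan m n) (stdPartition m n hm hn) := by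
  intro b hb x hx y hy hxy
  simp only [stdPartition, stdParts, mem_insert, mem_singleton] at hb
  rcases hb with rfl | rfl | rfl
  · rw [mem_blk] at hx hy
    cases x with
    | inl i =>
      cases y with
      | inl j => exact not_adj_ll m n i j hxy
      | inr v => simp only [col] at hy; split at hy <;> simp_all
    | inr u => simp only [col] at hx; split at hx <;> simp_all
  · rw [mem_blk] at hx hy
    cases x with
    | inl i => exact absurd hx (by simp [col])
    | inr u =>
      cases y with
      | inl j => exact absurd hy (by simp [col])
      | inr v =>
        have hu : u.val % 2 = 0 := by
          simp only [col] at hx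
          by_contra h; rw [if_neg h] at hx; exact absurd hx (by decide)
        have hv : v.val % 2 = 0 := by
          simp only [col] at hy
          by_contra h; rw [if_neg h] at hy; exact absurd hy (by decide)
        rcases adj_rr hxy with h | h <;> omega
  · rw [mem_blk] at hx hy
    cases x with
    | inl i => exact absurd hx (by simp [col])
    | inr u =>
      cases y with
      | inl j => exact absurd hy (by simp [col])
      | inr v =>
        have hu : ¬ u.val % 2 = 0 := by
          simp only [col] at hx
          by_contra h
          rw [if_pos h] at hx; exact absurd hx (by decide)
        have hv : ¬ v.val % 2 = 0 := by
          simp only [col] at hy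
          by_contra h
          rw [if_pos h] at hy; exact absurd hy (by decide)
        rcases adj_rr hxy with h | h <;> omega

end FanAux

/-- **Lemma.** For `m ≥ 1` and `n ≥ 2`, the fan graph `F_{m,n}` has exactly one
stable partition into three blocks, and its block sizes are `m`, `⌈n/2⌉` and
`⌊n/2⌋`. -/
theorem fan_unique_stable_tripartition (m n : ℕ) (hm : 1 ≤ m) (hn : 2 ≤ n) :
    (∃! P : Finpartition (Finset.univ : Finset (Fin m ⊕ Fin n)),
        IsStablePartition (fan m n) P ∧ P.parts.card = 3) ∧
    (∀ P : Finpartition (Finset.univ : Finset (Fin m ⊕ Fin n)),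
        IsStablePartition (fan m n) P → P.parts.card = 3 →
        typeOf P = {m, (n + 1) / 2, n / 2}) := by
  constructor
  · refine ⟨FanAux.stdPartition m n hm hn,
      ⟨FanAux.stable_stdPartition m n hm hn, FanAux.card_stdParts m n hm hn⟩, ?_⟩
    rintro Q ⟨hQ, hQ3⟩
    apply Finpartition.ext
    rw [FanAux.parts_eq m n hm hn Q hQ hQ3]
    rfl
  · intro P hP h3
    rw [typeOf, FanAux.parts_eq m n hm hn P hP h3, FanAux.stdParts_val m n hm hn]
    simp [Multiset.insert_eq_cons, FanAux.card_blk0, FanAux.card_blk1, FanAux.card_blk2]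
end
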